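/- arXiv:1801.10401 — 5 statements merged into one kernel-verified Lean document; each statement's English description precedes it below -/
import Mathlib

section
/- A DAG D satisfies the degree condition (for every vertex v with indegree greater than 1, every vertex reachable from v has outdegree at most 1) if and only if no subgraph of D is isomorphic to any member of the family F = {D_k : k ≥ 0}. -/
variable {V : Type*} [Fintype V] [DecidableEq V]

/-- Arc adjacency of a digraph given by its finite arc set. -/
def ArcAdj (A : Finset (V × V)) : V → V → Prop := fun u v => (u, v) ∈ A

/-- A digraph is a DAG if it contains no directed cycle. -/
def IsDAG (A : Finset (V × V)) : Prop := ∀ v : V, ¬ Relation.TransGen (ArcAdj A) v v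

/-- Indegree of a vertex. -/
def inDeg (A : Finset (V × V)) (v : V) : ℕ := (A.filter fun e => e.2 = v).card

/-- Outdegree of a vertex. -/
def outDeg (A : Finset (V × V)) (v : V) : ℕ := (A.filter fun e => e.1 = v).card

/-- A source is a vertex of indegree 0. -/
def IsSource (A : Finset (V × V)) (v : V) : Prop := inDeg A v = 0

/-- A sink is a vertex of outdegree 0. -/
def IsSink (A : Finset (V × V)) (v : V) : Prop := outDeg A v = 0

/-- The arcs (consecutive pairs of vertices) of a path given as a list of vertices. -/
def arcsOf (p : List V) : List (V × V) := p.zip p.tail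

/-- A source-sink path: a directed path (with at least one arc) starting at a
source and ending at a sink. -/
def IsSourceSinkPath (A : Finset (V × V)) (p : List V) : Prop :=
  2 ≤ p.length ∧ List.Chain' (ArcAdj A) p ∧ p.Nodup ∧
  (∃ s, p.head? = some s ∧ IsSource A s) ∧
  (∃ t, p.getLast? = some t ∧ IsSink A t)

/-- An arc is private if exactly one source-sink path contains it. -/
def IsPrivate (A : Finset (V × V)) (e : V × V) : Prop :=
  ∃! p : List V, IsSourceSinkPath A p ∧ e ∈ arcsOf p

/-- A funnel: every source-sink path contains at least one private arc. -/
def IsFunnel (A : Finset (V × V)) : Prop :=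
  ∀ p : List V, IsSourceSinkPath A p → ∃ e ∈ arcsOf p, IsPrivate A e

/-- The arc-deletion distance to a funnel: the minimum number of arcs whose
deletion turns the digraph into a funnel. -/
noncomputable def funnelDist (A : Finset (V × V)) : ℕ :=
  sInf {k | ∃ B ⊆ A, B.card = k ∧ IsFunnel (A \ B)}

/-- `D` contains the forbidden graph `D_k` as a subgraph: there are distinct
vertices `u₁, u₂, v₀, …, v_k, w₁, w₂` with arcs `(u₁,v₀)`, `(u₂,v₀)`,
`(v_k,w₁)`, `(v_k,w₂)` and `(v_i, v_{i+1})` for `0 ≤ i ≤ k-1`. -/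
def ContainsDk (A : Finset (V × V)) (k : ℕ) : Prop :=
  ∃ (u₁ u₂ w₁ w₂ : V) (vs : Fin (k + 1) → V),
    (u₁ :: u₂ :: w₁ :: w₂ :: List.ofFn vs).Nodup ∧
    (u₁, vs 0) ∈ A ∧ (u₂, vs 0) ∈ A ∧
    (vs (Fin.last k), w₁) ∈ A ∧ (vs (Fin.last k), w₂) ∈ A ∧
    ∀ i : Fin k, (vs i.castSucc, vs i.succ) ∈ A

lemma chain'_reflTransGen_aux {r : V → V → Prop} {p : List V} (h : List.Chain' r p)
    {i j : ℕ} (hij : i ≤ j) (hj : j < p.length) :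
    Relation.ReflTransGen r (p.get ⟨i, lt_of_le_of_lt hij hj⟩) (p.get ⟨j, hj⟩) := by
  induction j with
  | zero =>
    have : i = 0 := Nat.le_zero.mp hij
    subst this; exact Relation.ReflTransGen.refl
  | succ n ih =>
    rcases Nat.lt_or_ge i (n + 1) with h' | h'
    · have hin : i ≤ n := Nat.lt_succ_iff.mp h'
      have hstep : r (p.get ⟨n, Nat.lt_of_succ_lt hj⟩) (p.get ⟨n + 1, hj⟩) :=
        List.isChain_iff_getElem.mp h n (by omega)
      exact (ih hin (Nat.lt_of_succ_lt hj)).tail hstep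
    · have : i = n + 1 := le_antisymm hij h'
      subst this; exact Relation.ReflTransGen.refl

lemma nodup_of_chain'_dag {A : Finset (V × V)} (hdag : IsDAG A) {p : List V}
    (h : List.Chain' (ArcAdj A) p) : p.Nodup := by
  rw [List.nodup_iff_injective_get]
  intro a b hab
  by_contra hne
  have hne' : a.1 ≠ b.1 := fun hh => hne (Fin.ext hh)
  have key : ∀ a b : Fin p.length, a.1 < b.1 → p.get a = p.get b → False := by
    intro a b hlt hab
    have h1 : ArcAdj A (p.get a) (p.get ⟨a.1 + 1, by omega⟩) := by
      have := List.isChain_iff_getElem.mp h a.1 (by omega)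
      simpa using this
    have h2 : Relation.ReflTransGen (ArcAdj A) (p.get ⟨a.1 + 1, by omega⟩) (p.get b) := by
      have := chain'_reflTransGen_aux h (i := a.1 + 1) (j := b.1) (by omega) b.isLt
      simpa using this
    have : Relation.TransGen (ArcAdj A) (p.get a) (p.get a) := by
      have := Relation.TransGen.head' h1 h2
      rwa [← hab] at this
    exact hdag _ this
  rcases lt_or_gt_of_ne hne' with hlt | hlt
  · exact key a b hlt hab
  · exact key b a hlt hab.symm

/-- A DAG satisfies the degree condition iff no subgraph of it is
isomorphic to any member of the family `F = {D_k : k ≥ 0}`. -/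
theorem degree_condition_iff_no_Dk_subgraph (A : Finset (V × V)) (hdag : IsDAG A) :
    (∀ v : V, 1 < inDeg A v →
        ∀ u : V, Relation.ReflTransGen (ArcAdj A) v u → outDeg A u ≤ 1) ↔
      ∀ k : ℕ, ¬ ContainsDk A k := by
  constructor
  · rintro hdeg k ⟨u₁, u₂, w₁, w₂, vs, hnd, h1, h2, h3, h4, h5⟩
    simp only [List.nodup_cons, List.mem_cons] at hnd
    have hu : u₁ ≠ u₂ := fun hh => hnd.1 (Or.inl hh)
    have hw : w₁ ≠ w₂ := fun hh => hnd.2.2.1 (Or.inl hh)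
    have hin : 1 < inDeg A (vs 0) := by
      rw [inDeg, Finset.one_lt_card]
      refine ⟨(u₁, vs 0), by simp [h1], (u₂, vs 0), by simp [h2], by simp [hu]⟩
    have hreach : ∀ i : Fin (k + 1), Relation.ReflTransGen (ArcAdj A) (vs 0) (vs i) := by
      intro i
      induction i using Fin.induction with
      | zero => exact Relation.ReflTransGen.refl
      | succ i ih => exact ih.tail (h5 i)
    have hle := hdeg (vs 0) hin (vs (Fin.last k)) (hreach _)
    have hout : 1 < outDeg A (vs (Fin.last k)) := by
      rw [outDeg, Finset.one_lt_card]
      refine ⟨(vs (Fin.last k), w₁), by simp [h3], (vs (Fin.last k), w₂), by simp [h4],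
        by simp [hw]⟩
    omega
  · intro hno v hv u hvu
    by_contra hout
    push_neg at hout
    obtain ⟨l, hchain, hlast⟩ := List.exists_isChain_cons_of_relationReflTransGen hvu
    set p : List V := v :: l with hp
    have hchain' : List.Chain' (ArcAdj A) p := hchain
    have hplen : p.length = l.length + 1 := by simp [hp]
    set k : ℕ := l.length with hk
    set vs : Fin (k + 1) → V := fun i => p.get (Fin.cast hplen.symm i) with hvs
    have hvs0 : vs 0 = v := rfl
    have hvslast : vs (Fin.last k) = u := by
      have : p.getLast (by simp [hp]) = u := hlast
      rw [List.getLast_eq_getElem] at this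
      simpa [hvs, hplen, Fin.cast, Fin.last] using this
    have hnodup : p.Nodup := nodup_of_chain'_dag hdag hchain'
    -- arcs of the path
    have harc : ∀ i : Fin k, (vs i.castSucc, vs i.succ) ∈ A := by
      intro i
      have := List.isChain_iff_getElem.mp hchain' i.1
        (by simp only [hplen, Nat.add_sub_cancel]; exact Nat.succ_lt_succ i.isLt)
      exact this
    -- reachability facts
    have hreach0 : ∀ i : Fin (k + 1), Relation.ReflTransGen (ArcAdj A) v (vs i) := by
      intro i
      have := chain'_reflTransGen_aux hchain' (i := 0) (j := i.1)
        (Nat.zero_le _) (by rw [hplen]; exact i.isLt)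
      exact this
    have hreachlast : ∀ i : Fin (k + 1), Relation.ReflTransGen (ArcAdj A) (vs i) u := by
      intro i
      have := chain'_reflTransGen_aux hchain' (i := i.1) (j := k)
        (by omega) (by simp [hplen])
      rw [← hvslast]
      exact this
    -- in-arcs and out-arcs
    obtain ⟨e₁, he₁, e₂, he₂, hne⟩ := Finset.one_lt_card.mp hv
    simp only [Finset.mem_filter] at he₁ he₂
    obtain ⟨f₁, hf₁, f₂, hf₂, hfne⟩ := Finset.one_lt_card.mp hout
    simp only [Finset.mem_filter] at hf₁ hf₂
    set u₁ := e₁.1; set u₂ := e₂.1; set w₁ := f₁.2; set w₂ := f₂.2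
    have hu₁v : (u₁, v) ∈ A := by rw [← he₁.2]; exact he₁.1
    have hu₂v : (u₂, v) ∈ A := by rw [← he₂.2]; exact he₂.1
    have huw₁ : (u, w₁) ∈ A := by rw [← hf₁.2]; exact hf₁.1
    have huw₂ : (u, w₂) ∈ A := by rw [← hf₂.2]; exact hf₂.1
    have hu12 : u₁ ≠ u₂ := by
      intro hh
      apply hne
      exact Prod.ext hh (he₁.2.trans he₂.2.symm)
    have hw12 : w₁ ≠ w₂ := by
      intro hh
      apply hfne
      exact Prod.ext (hf₁.2.trans hf₂.2.symm) hh
    -- disjointness facts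
    have hu_ne_vs : ∀ (x : V), (x, v) ∈ A → ∀ i : Fin (k + 1), x ≠ vs i := by
      intro x hx i hh
      apply hdag x
      have := Relation.TransGen.head' (show ArcAdj A x v from hx) (hreach0 i)
      rwa [← hh] at this
    have hw_ne_vs : ∀ (y : V), (u, y) ∈ A → ∀ i : Fin (k + 1), y ≠ vs i := by
      intro y hy i hh
      apply hdag y
      have := Relation.TransGen.tail' (hreachlast i) (show ArcAdj A u y from hy)
      rwa [← hh] at this
    have hu_ne_w : ∀ (x y : V), (x, v) ∈ A → (u, y) ∈ A → x ≠ y := by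
      intro x y hx hy hh
      apply hdag x
      have : Relation.ReflTransGen (ArcAdj A) v y := hvu.tail hy
      have := Relation.TransGen.head' (show ArcAdj A x v from hx) this
      rwa [← hh] at this
    apply hno k
    refine ⟨u₁, u₂, w₁, w₂, vs, ?_, by rw [hvs0]; exact hu₁v, by rw [hvs0]; exact hu₂v,
      by rw [hvslast]; exact huw₁, by rw [hvslast]; exact huw₂, harc⟩
    have hvsinj : Function.Injective vs := by
      intro i j hij
      have := List.nodup_iff_injective_get.mp hnodup hij
      exact Fin.ext (congrArg Fin.val this)
    have hofn : (List.ofFn vs).Nodup := List.nodup_ofFn.mpr hvsinj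
    simp only [List.nodup_cons, List.mem_cons, List.mem_ofFn, Set.mem_range]
    refine ⟨?_, ?_, ?_, ⟨?_, hofn⟩⟩
    · push_neg
      exact ⟨hu12, hu_ne_w _ _ hu₁v huw₁, hu_ne_w _ _ hu₁v huw₂,
        fun i hh => hu_ne_vs _ hu₁v i hh.symm⟩
    · push_neg
      exact ⟨hu_ne_w _ _ hu₂v huw₁, hu_ne_w _ _ hu₂v huw₂,
        fun i hh => hu_ne_vs _ hu₂v i hh.symm⟩
    · push_neg
      exact ⟨hw12, fun i hh => hw_ne_vs _ huw₁ i hh.symm⟩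
    · push_neg
      exact fun i hh => hw_ne_vs _ huw₂ i hh.symm
end

section
/- In a funnel D = (V,A), the number of distinct source-sink paths is at most |A|, the number of arcs of D. -/
variable {V : Type*} [Fintype V] [DecidableEq V]

lemma mem_arcsOf_of_chain' {V : Type*} {R : V → V → Prop} :
    ∀ {p : List V}, List.Chain' R p → ∀ e ∈ arcsOf p, R e.1 e.2 := by
  intro p
  induction p with
  | nil => intro _ e he; simp [arcsOf] at he
  | cons a l ih =>
    intro h e he
    cases l with
    | nil => simp [arcsOf] at he
    | cons b t =>
      simp only [arcsOf, List.tail, List.zip_cons_cons, List.mem_cons] at he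
      rcases he with rfl | he
      · exact (List.isChain_cons_cons.mp h).1
      · exact ih (List.isChain_cons_cons.mp h).2 e he

/-- In a funnel, the number of distinct source-sink paths is at
most the number of arcs. -/
theorem card_sourceSinkPaths_le_card_arcs (A : Finset (V × V)) (hdag : IsDAG A)
    (hfun : IsFunnel A) :
    {p : List V | IsSourceSinkPath A p}.ncard ≤ A.card := by
  classical
  set S := {p : List V | IsSourceSinkPath A p} with hS
  rcases S.eq_empty_or_nonempty with h | ⟨p₀, hp₀⟩
  · simp [h]
  have hV : Nonempty (V × V) := by
    have h2 := hp₀.1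
    cases p₀ with
    | nil => simp at h2
    | cons a l => exact ⟨(a, a)⟩
  set f : List V → V × V := fun p =>
    if h : ∃ e ∈ arcsOf p, IsPrivate A e then h.choose else Classical.arbitrary _
    with hf
  have key : ∀ p ∈ S, f p ∈ arcsOf p ∧ IsPrivate A (f p) := by
    intro p hp
    have h := hfun p hp
    simp only [hf, dif_pos h]
    exact ⟨h.choose_spec.1, h.choose_spec.2⟩
  have hmaps : ∀ p ∈ S, f p ∈ (↑A : Set (V × V)) := by
    intro p hp
    have hk := key p hp
    have := mem_arcsOf_of_chain' hp.2.1 _ hk.1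
    simpa [ArcAdj] using this
  have hinj : Set.InjOn f S := by
    intro p hp q hq hpq
    obtain ⟨hep, hprivp⟩ := key p hp
    obtain ⟨heq, _⟩ := key q hq
    obtain ⟨r, -, hr⟩ := hprivp
    have h1 := hr p ⟨hp, hep⟩
    have h2 := hr q ⟨hq, hpq ▸ heq⟩
    rw [h1, h2]
  calc S.ncard ≤ (↑A : Set (V × V)).ncard :=
        Set.ncard_le_ncard_of_injOn f hmaps hinj A.finite_toSet
    _ = A.card := Set.ncard_coe_finset A
end

section
/- Every funnel D = (V,A) satisfies |A| ≤ |V|²/4 + |V| − 2. -/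
variable {V : Type*} [Fintype V] [DecidableEq V]

open Relation List
set_option linter.unusedSectionVars false

section
variable {A : Finset (V × V)}

lemma wf_adj (hdag : IsDAG A) : WellFounded (ArcAdj A) := by
  have : IsTrans V (TransGen (ArcAdj A)) := ⟨fun a b c => TransGen.trans⟩
  have : IsIrrefl V (TransGen (ArcAdj A)) := ⟨hdag⟩
  exact Subrelation.wf (fun {a b} hr => TransGen.single hr)
    (Finite.wellFounded_of_trans_of_irrefl (TransGen (ArcAdj A)))

lemma wf_adj_flip (hdag : IsDAG A) : WellFounded (Function.swap (ArcAdj A)) := by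
  have : IsTrans V (TransGen (Function.swap (ArcAdj A))) := ⟨fun a b c => TransGen.trans⟩
  have : IsIrrefl V (TransGen (Function.swap (ArcAdj A))) :=
    ⟨fun a h => hdag a (Relation.transGen_swap.mp h)⟩
  exact Subrelation.wf (fun {a b} hr => TransGen.single hr)
    (Finite.wellFounded_of_trans_of_irrefl (TransGen (Function.swap (ArcAdj A))))

lemma mem_arcsOf {e : V × V} {l : List V} (h : e ∈ arcsOf l) : e.1 ∈ l ∧ e.2 ∈ l := by
  have h2 := List.of_mem_zip h
  exact ⟨h2.1, List.mem_of_mem_tail h2.2⟩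

lemma mem_arcsOf_append {e : V × V} {l1 l2 : List V} :
    e ∈ arcsOf (l1 ++ l2) ↔ e ∈ arcsOf l1 ∨
      (∃ x y, l1.getLast? = some x ∧ l2.head? = some y ∧ e = (x, y)) ∨ e ∈ arcsOf l2 := by
  induction l1 with
  | nil => simp [arcsOf]
  | cons a t ih =>
    cases t with
    | nil =>
      cases l2 with
      | nil => simp [arcsOf]
      | cons y t2 =>
        simp only [List.singleton_append, arcsOf, List.tail, List.zip_cons_cons,
          List.mem_cons, List.getLast?_singleton, List.head?_cons]
        constructor
        · rintro (rfl | h)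
          · exact Or.inr (Or.inl ⟨a, y, rfl, rfl, rfl⟩)
          · exact Or.inr (Or.inr h)
        · rintro (h | ⟨x, y', hx, hy, rfl⟩ | h)
          · simp [arcsOf] at h
          · simp_all
          · exact Or.inr h
    | cons b t' =>
      have harc : ∀ l : List V, arcsOf (a :: b :: l) = (a, b) :: arcsOf (b :: l) := by
        intro l; simp [arcsOf]
      have hgl : (a :: b :: t').getLast? = (b :: t').getLast? := by
        simp [List.getLast?_cons_cons]
      rw [show (a :: b :: t') ++ l2 = a :: b :: (t' ++ l2) by simp, harc, harc, hgl]
      simp only [List.mem_cons, show b :: (t' ++ l2) = (b :: t') ++ l2 by simp, ih]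
      generalize (∃ x y, (b :: t').getLast? = some x ∧ l2.head? = some y ∧ e = (x, y)) = P
      tauto

set_option linter.unusedSectionVars false

lemma not_arc_to_head {l : List V} (hn : l.Nodup) {u w : V} (hh : l.head? = some w) :
    (u, w) ∉ arcsOf l := by
  intro hmem
  cases l with
  | nil => simp at hh
  | cons a t =>
    simp only [List.head?_cons, Option.some.injEq] at hh
    subst hh
    cases t with
    | nil => simp [arcsOf] at hmem
    | cons b t' =>
      simp only [arcsOf, List.tail, List.zip_cons_cons, List.mem_cons, Prod.mk.injEq] at hmem
      rcases hmem with ⟨h1, h2⟩ | hmem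
      · subst h1 h2; simp at hn
      · have h2 : a ∈ t' := by simpa using (List.of_mem_zip hmem).2
        simp_all

lemma exists_path_from_source (hdag : IsDAG A) (v : V) :
    ∃ p : List V, List.Chain' (ArcAdj A) p ∧ p.Nodup ∧ p.getLast? = some v ∧
      (∃ s, p.head? = some s ∧ IsSource A s) ∧
      ∀ u ∈ p, Relation.ReflTransGen (ArcAdj A) u v := by
  induction v using (wf_adj hdag).induction with
  | _ v IH =>
    by_cases h : inDeg A v = 0
    · refine ⟨[v], List.isChain_singleton v, by simp, by simp, ⟨v, by simp, h⟩, ?_⟩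
      intro u hu; simp at hu; subst hu; exact ReflTransGen.refl
    · have : (A.filter fun e => e.2 = v).Nonempty := Finset.card_ne_zero.mp h
      obtain ⟨e, he⟩ := this
      obtain ⟨heA, he2⟩ := Finset.mem_filter.mp he
      have hadj : ArcAdj A e.1 v := by rw [ArcAdj]; rwa [← he2, Prod.mk.eta]
      obtain ⟨p, hc, hnd, hlast, hsrc, hreach⟩ := IH e.1 hadj
      have hvp : v ∉ p := fun hv => hdag v (TransGen.tail' (hreach v hv) hadj)
      refine ⟨p ++ [v], ?_, ?_, by simp, ?_, ?_⟩
      · rw [List.Chain', List.isChain_append]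
        refine ⟨hc, by simp, ?_⟩
        intro x hx y hy
        simp only [List.head?_cons, Option.mem_def, Option.some.injEq] at hy
        rw [hlast] at hx
        simp only [Option.mem_def, Option.some.injEq] at hx
        subst hx; subst hy; exact hadj
      · rw [List.nodup_append]
        refine ⟨hnd, by simp, ?_⟩
        intro x hx y hy hxy
        simp only [List.mem_singleton] at hy
        subst hy; exact hvp (hxy ▸ hx)
      · obtain ⟨s, hs, hss⟩ := hsrc
        exact ⟨s, by rw [List.head?_append, hs]; rfl, hss⟩
      · intro u hu
        rcases List.mem_append.mp hu with hu | hu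
        · exact (hreach u hu).trans (ReflTransGen.single hadj)
        · simp at hu; subst hu; exact ReflTransGen.refl

lemma exists_path_to_sink (hdag : IsDAG A) (v : V) :
    ∃ p : List V, List.Chain' (ArcAdj A) p ∧ p.Nodup ∧ p.head? = some v ∧
      (∃ t, p.getLast? = some t ∧ IsSink A t) ∧
      ∀ u ∈ p, Relation.ReflTransGen (ArcAdj A) v u := by
  induction v using (wf_adj_flip hdag).induction with
  | _ v IH =>
    by_cases h : outDeg A v = 0
    · refine ⟨[v], List.isChain_singleton v, by simp, by simp, ⟨v, by simp, h⟩, ?_⟩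
      intro u hu; simp at hu; subst hu; exact ReflTransGen.refl
    · have : (A.filter fun e => e.1 = v).Nonempty := Finset.card_ne_zero.mp h
      obtain ⟨e, he⟩ := this
      obtain ⟨heA, he1⟩ := Finset.mem_filter.mp he
      have hadj : ArcAdj A v e.2 := by rw [ArcAdj]; rwa [← he1, Prod.mk.eta]
      obtain ⟨p, hc, hnd, hhead, hsink, hreach⟩ := IH e.2 hadj
      have hvp : v ∉ p := fun hv => hdag v (TransGen.head' hadj (hreach v hv))
      refine ⟨v :: p, ?_, List.nodup_cons.mpr ⟨hvp, hnd⟩, by simp, ?_, ?_⟩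
      · rw [show v :: p = [v] ++ p by simp, List.Chain', List.isChain_append]
        refine ⟨by simp, hc, ?_⟩
        intro x hx y hy
        simp only [List.getLast?_singleton, Option.mem_def, Option.some.injEq] at hx
        rw [hhead] at hy
        simp only [Option.mem_def, Option.some.injEq] at hy
        subst hx; subst hy; exact hadj
      · obtain ⟨t, ht, hts⟩ := hsink
        refine ⟨t, ?_, hts⟩
        rw [show v :: p = [v] ++ p by simp, List.getLast?_append, ht]; rfl
      · intro u hu
        rcases List.mem_cons.mp hu with hu | hu
        · subst hu; exact ReflTransGen.refl
        · exact ReflTransGen.head hadj (hreach u hu)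

lemma reflTransGen_path (hdag : IsDAG A) {a b : V}
    (h : Relation.ReflTransGen (ArcAdj A) a b) :
    ∃ p : List V, List.Chain' (ArcAdj A) p ∧ p.Nodup ∧ p.head? = some a ∧
      p.getLast? = some b ∧
      ∀ u ∈ p, Relation.ReflTransGen (ArcAdj A) a u ∧ Relation.ReflTransGen (ArcAdj A) u b := by
  induction h using Relation.ReflTransGen.head_induction_on with
  | refl =>
    refine ⟨[b], List.isChain_singleton b, by simp, by simp, by simp, ?_⟩
    intro u hu; simp at hu; subst hu; exact ⟨ReflTransGen.refl, ReflTransGen.refl⟩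
  | head hac hcb ih =>
    rename_i a' c
    obtain ⟨p, hc, hnd, hhead, hlast, hreach⟩ := ih
    have hap : a' ∉ p := fun ha => hdag a' (TransGen.head' hac (hreach a' ha).1)
    refine ⟨a' :: p, ?_, List.nodup_cons.mpr ⟨hap, hnd⟩, by simp, ?_, ?_⟩
    · rw [show a' :: p = [a'] ++ p by simp, List.Chain', List.isChain_append]
      refine ⟨by simp, hc, ?_⟩
      intro x hx y hy
      simp only [List.getLast?_singleton, Option.mem_def, Option.some.injEq] at hx
      rw [hhead] at hy
      simp only [Option.mem_def, Option.some.injEq] at hy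
      subst hx; subst hy; exact hac
    · rw [show a' :: p = [a'] ++ p by simp, List.getLast?_append, hlast]; rfl
    · intro u hu
      rcases List.mem_cons.mp hu with hu | hu
      · subst hu; exact ⟨ReflTransGen.refl, ReflTransGen.head hac hcb⟩
      · exact ⟨ReflTransGen.head hac (hreach u hu).1, (hreach u hu).2⟩

lemma build_ssp (hdag : IsDAG A) {S P T : List V} {x a b y : V}
    (hSc : List.Chain' (ArcAdj A) S) (hSn : S.Nodup) (hSl : S.getLast? = some x)
    (hSs : ∃ s, S.head? = some s ∧ IsSource A s)
    (hSr : ∀ u ∈ S, Relation.ReflTransGen (ArcAdj A) u x)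
    (hxa : ArcAdj A x a)
    (hPc : List.Chain' (ArcAdj A) P) (hPn : P.Nodup) (hPh : P.head? = some a)
    (hPl : P.getLast? = some b)
    (hPr : ∀ u ∈ P, Relation.ReflTransGen (ArcAdj A) a u ∧ Relation.ReflTransGen (ArcAdj A) u b)
    (hby : ArcAdj A b y)
    (hTc : List.Chain' (ArcAdj A) T) (hTn : T.Nodup) (hTh : T.head? = some y)
    (hTt : ∃ t, T.getLast? = some t ∧ IsSink A t)
    (hTr : ∀ u ∈ T, Relation.ReflTransGen (ArcAdj A) y u) :
    IsSourceSinkPath A (S ++ (P ++ T)) := by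
  have hSne : S ≠ [] := by intro h; rw [h] at hSl; simp at hSl
  have hPne : P ≠ [] := by intro h; rw [h] at hPh; simp at hPh
  have hTne : T ≠ [] := by intro h; rw [h] at hTh; simp at hTh
  have hab : Relation.ReflTransGen (ArcAdj A) a b := by
    have hbP : b ∈ P := by
      rcases List.mem_getLast?_eq_getLast (show b ∈ P.getLast? from hPl ▸ rfl) with ⟨hne, hb⟩
      rw [hb]; exact List.getLast_mem hne
    exact (hPr b hbP).1
  -- disjointness facts
  have hSP : ∀ u ∈ S, u ∉ P := by
    intro u hu hup
    exact hdag u ((TransGen.tail' (hSr u hu) hxa).trans_left (hPr u hup).1)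
  have hST : ∀ u ∈ S, u ∉ T := by
    intro u hu hut
    refine hdag u ((TransGen.tail' (hSr u hu) hxa).trans_left ?_)
    exact (TransGen.tail' hab hby).to_reflTransGen.trans (hTr u hut)
  have hPT : ∀ u ∈ P, u ∉ T := by
    intro u hu hut
    exact hdag u ((TransGen.tail' (hPr u hu).2 hby).trans_left (hTr u hut))
  constructor
  · have := List.length_pos_iff.mpr hSne
    have := List.length_pos_iff.mpr hPne
    simp only [List.length_append]
    omega
  refine ⟨?_, ?_, ?_, ?_⟩
  · rw [List.Chain', List.isChain_append]
    refine ⟨hSc, ?_, ?_⟩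
    · rw [List.isChain_append]
      refine ⟨hPc, hTc, ?_⟩
      intro u hu w hw
      rw [hPl] at hu; rw [hTh] at hw
      simp only [Option.mem_def, Option.some.injEq] at hu hw
      subst hu; subst hw; exact hby
    · intro u hu w hw
      rw [hSl] at hu
      have hPTh : (P ++ T).head? = some a := by rw [List.head?_append, hPh]; rfl
      rw [hPTh] at hw
      simp only [Option.mem_def, Option.some.injEq] at hu hw
      subst hu; subst hw; exact hxa
  · rw [List.nodup_append, List.nodup_append]
    refine ⟨hSn, ⟨hPn, hTn, fun u hu w hw huw => hPT u hu (huw ▸ hw)⟩, ?_⟩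
    intro u hu w hw huw
    rw [← huw] at hw
    rcases List.mem_append.mp hw with h | h
    · exact hSP u hu h
    · exact hST u hu h
  · obtain ⟨s, hs, hss⟩ := hSs
    exact ⟨s, by rw [List.head?_append, hs]; rfl, hss⟩
  · obtain ⟨t, ht, htt⟩ := hTt
    refine ⟨t, ?_, htt⟩
    rw [List.getLast?_append, List.getLast?_append, ht]; rfl

lemma no_merge_to_fork (hdag : IsDAG A) (hfun : IsFunnel A) {a b : V}
    (hab : Relation.ReflTransGen (ArcAdj A) a b)
    (ha : 2 ≤ inDeg A a) (hb : 2 ≤ outDeg A b) : False := by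
  obtain ⟨e1, he1, e2, he2, hne⟩ := Finset.one_lt_card.mp ha
  have he1A := (Finset.mem_filter.mp he1).1
  have he1a := (Finset.mem_filter.mp he1).2
  have he2A := (Finset.mem_filter.mp he2).1
  have he2a := (Finset.mem_filter.mp he2).2
  have hx1a : ArcAdj A e1.1 a := by rw [ArcAdj]; rwa [← he1a, Prod.mk.eta]
  have hx2a : ArcAdj A e2.1 a := by rw [ArcAdj]; rwa [← he2a, Prod.mk.eta]
  have hxne : e1.1 ≠ e2.1 := fun h => hne (Prod.ext h (he1a.trans he2a.symm))
  obtain ⟨f1, hf1, f2, hf2, hnef⟩ := Finset.one_lt_card.mp hb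
  have hf1A := (Finset.mem_filter.mp hf1).1
  have hf1b := (Finset.mem_filter.mp hf1).2
  have hf2A := (Finset.mem_filter.mp hf2).1
  have hf2b := (Finset.mem_filter.mp hf2).2
  have hby1 : ArcAdj A b f1.2 := by rw [ArcAdj]; rwa [← hf1b, Prod.mk.eta]
  have hby2 : ArcAdj A b f2.2 := by rw [ArcAdj]; rwa [← hf2b, Prod.mk.eta]
  have hyne : f1.2 ≠ f2.2 := fun h => hnef (Prod.ext (hf1b.trans hf2b.symm) h)
  obtain ⟨S1, hS1c, hS1n, hS1l, hS1s, hS1r⟩ := exists_path_from_source hdag e1.1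
  obtain ⟨S2, hS2c, hS2n, hS2l, hS2s, hS2r⟩ := exists_path_from_source hdag e2.1
  obtain ⟨T1, hT1c, hT1n, hT1h, hT1t, hT1r⟩ := exists_path_to_sink hdag f1.2
  obtain ⟨T2, hT2c, hT2n, hT2h, hT2t, hT2r⟩ := exists_path_to_sink hdag f2.2
  obtain ⟨P, hPc, hPn, hPh, hPl, hPr⟩ := reflTransGen_path hdag hab
  have hQ11 : IsSourceSinkPath A (S1 ++ (P ++ T1)) :=
    build_ssp hdag hS1c hS1n hS1l hS1s hS1r hx1a hPc hPn hPh hPl hPr hby1 hT1c hT1n hT1h hT1t hT1r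
  have hQ12 : IsSourceSinkPath A (S1 ++ (P ++ T2)) :=
    build_ssp hdag hS1c hS1n hS1l hS1s hS1r hx1a hPc hPn hPh hPl hPr hby2 hT2c hT2n hT2h hT2t hT2r
  have hQ21 : IsSourceSinkPath A (S2 ++ (P ++ T1)) :=
    build_ssp hdag hS2c hS2n hS2l hS2s hS2r hx2a hPc hPn hPh hPl hPr hby1 hT1c hT1n hT1h hT1t hT1r
  have hPT1h : (P ++ T1).head? = some a := by rw [List.head?_append, hPh]; rfl
  have hPT2h : (P ++ T2).head? = some a := by rw [List.head?_append, hPh]; rfl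
  -- Q12 ≠ Q11
  have hne12 : S1 ++ (P ++ T2) ≠ S1 ++ (P ++ T1) := by
    intro h
    have h2 : T2 = T1 := List.append_cancel_left (List.append_cancel_left h)
    rw [h2, hT1h] at hT2h
    exact hyne (show f1.2 = f2.2 by simp only [Option.some.injEq] at hT2h; exact hT2h)
  -- Q21 ≠ Q11
  have hne21 : S2 ++ (P ++ T1) ≠ S1 ++ (P ++ T1) := by
    intro h
    have harc : (e1.1, a) ∈ arcsOf (S1 ++ (P ++ T1)) :=
      mem_arcsOf_append.mpr (Or.inr (Or.inl ⟨e1.1, a, hS1l, hPT1h, rfl⟩))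
    rw [← h] at harc
    rcases mem_arcsOf_append.mp harc with h' | ⟨x, y, hx, hy, hxy⟩ | h'
    · have haS2 : a ∈ S2 := (mem_arcsOf h').2
      exact hdag a (TransGen.tail' (hS2r a haS2) hx2a)
    · rw [hS2l] at hx
      simp only [Option.some.injEq] at hx
      have : e1.1 = x := congrArg Prod.fst hxy
      exact hxne (this.trans hx.symm)
    · have hnd : (P ++ T1).Nodup := (List.nodup_append.mp hQ11.2.2.1).2.1
      exact not_arc_to_head hnd hPT1h h'
  obtain ⟨e, he, hpriv⟩ := hfun _ hQ11
  obtain ⟨p0, _, huniq⟩ := hpriv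
  have hQ11p : S1 ++ (P ++ T1) = p0 := huniq _ ⟨hQ11, he⟩
  have key : ∀ Q', IsSourceSinkPath A Q' → e ∈ arcsOf Q' → Q' = S1 ++ (P ++ T1) :=
    fun Q' h1 h2 => (huniq Q' ⟨h1, h2⟩).trans hQ11p.symm
  rcases mem_arcsOf_append.mp he with h' | ⟨x, y, hx, hy, hxy⟩ | h'
  · exact hne12 (key _ hQ12 (mem_arcsOf_append.mpr (Or.inl h')))
  · rw [hPT1h] at hy
    simp only [Option.mem_def, Option.some.injEq] at hy
    subst hy
    exact hne12 (key _ hQ12 (mem_arcsOf_append.mpr (Or.inr (Or.inl ⟨x, a, hx, hPT2h, hxy⟩))))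
  · rcases mem_arcsOf_append.mp h' with h'' | ⟨x, y, hx, hy, hxy⟩ | h''
    · exact hne12 (key _ hQ12 (mem_arcsOf_append.mpr (Or.inr (Or.inr
        (mem_arcsOf_append.mpr (Or.inl h''))))))
    · exact hne21 (key _ hQ21 (mem_arcsOf_append.mpr (Or.inr (Or.inr
        (mem_arcsOf_append.mpr (Or.inr (Or.inl ⟨x, y, hx, hy, hxy⟩)))))))
    · exact hne21 (key _ hQ21 (mem_arcsOf_append.mpr (Or.inr (Or.inr
        (mem_arcsOf_append.mpr (Or.inr (Or.inr h'')))))))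

end


/-- Every funnel `D = (V, A)` satisfies `|A| ≤ |V|²/4 + |V| - 2`
(in truncated natural-number arithmetic). -/
theorem funnel_card_arcs_le (A : Finset (V × V)) (hdag : IsDAG A)
    (hfun : IsFunnel A) :
    A.card ≤ (Fintype.card V) ^ 2 / 4 + Fintype.card V - 2 := by
  classical
  by_cases hA : A = ∅
  · simp [hA]
  obtain ⟨e0, he0⟩ := Finset.nonempty_iff_ne_empty.mpr hA
  have hadj0 : ArcAdj A e0.1 e0.2 := by rw [ArcAdj, Prod.mk.eta]; exact he0
  have hn2 : 2 ≤ Fintype.card V := by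
    rw [show (2:ℕ) = 1 + 1 from rfl, Nat.add_one_le_iff]
    exact Fintype.one_lt_card_iff.mpr ⟨e0.1, e0.2, fun h => hdag e0.1 (TransGen.single (h ▸ hadj0))⟩
  set n := Fintype.card V with hn
  set M : Finset V :=
    Finset.univ.filter (fun v => ∃ c, 2 ≤ inDeg A c ∧ Relation.ReflTransGen (ArcAdj A) c v)
    with hM
  have hmemM : ∀ v : V, v ∈ M ↔ ∃ c, 2 ≤ inDeg A c ∧ Relation.ReflTransGen (ArcAdj A) c v := by
    intro v; simp [hM]
  have hMsucc : ∀ {u v : V}, u ∈ M → (u, v) ∈ A → v ∈ M := by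
    intro u v hu huv
    rw [hmemM] at hu ⊢
    obtain ⟨c, hc2, hcr⟩ := hu
    exact ⟨c, hc2, hcr.trans (ReflTransGen.single (show ArcAdj A u v from huv))⟩
  have hFdeg : ∀ v ∈ Mᶜ, inDeg A v ≤ 1 := by
    intro v hv
    by_contra h
    push_neg at h
    exact (Finset.mem_compl.mp hv) ((hmemM v).mpr ⟨v, h, ReflTransGen.refl⟩)
  have hMdeg : ∀ v ∈ M, outDeg A v ≤ 1 := by
    intro v hv
    by_contra h
    push_neg at h
    obtain ⟨c, hc2, hcr⟩ := (hmemM v).mp hv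
    exact no_merge_to_fork hdag hfun hcr hc2 h
  -- a source, lying in Mᶜ
  obtain ⟨v0, -, hv0min⟩ := (wf_adj hdag).has_min Set.univ ⟨e0.1, trivial⟩
  have hv0 : inDeg A v0 = 0 := by
    rw [inDeg, Finset.card_eq_zero, Finset.filter_eq_empty_iff]
    intro e heA he2
    exact hv0min e.1 trivial (show ArcAdj A e.1 v0 by rw [ArcAdj, ← he2, Prod.mk.eta]; exact heA)
  have hv0F : v0 ∈ Mᶜ := by
    rw [Finset.mem_compl]
    intro hv0M
    obtain ⟨c, hc2, hcr⟩ := (hmemM v0).mp hv0M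
    rcases Relation.ReflTransGen.cases_tail hcr with h | ⟨d, -, hd⟩
    · rw [← h] at hc2; omega
    · exact hv0min d trivial hd
  -- bound on arcs ending outside M
  have hboundF : (A.filter fun e => ¬ e.2 ∈ M).card ≤ Mᶜ.card - 1 := by
    have h1 : (A.filter fun e => ¬ e.2 ∈ M).card =
        ∑ v ∈ Mᶜ, ((A.filter fun e => ¬ e.2 ∈ M).filter fun e => e.2 = v).card :=
      Finset.card_eq_sum_card_fiberwise (by
        intro e he
        exact Finset.mem_compl.mpr (Finset.mem_filter.mp he).2)
    have h2 : ∀ v ∈ Mᶜ, ((A.filter fun e => ¬ e.2 ∈ M).filter fun e => e.2 = v).card ≤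
        inDeg A v := by
      intro v hv
      apply Finset.card_le_card
      intro e he
      simp only [Finset.mem_filter] at he ⊢
      exact ⟨he.1.1, he.2⟩
    calc (A.filter fun e => ¬ e.2 ∈ M).card
        ≤ ∑ v ∈ Mᶜ, inDeg A v := h1 ▸ Finset.sum_le_sum h2
      _ = ∑ v ∈ Mᶜ.erase v0, inDeg A v := (Finset.sum_erase _ hv0).symm
      _ ≤ ∑ _v ∈ Mᶜ.erase v0, 1 :=
          Finset.sum_le_sum (fun v hv => hFdeg v (Finset.mem_of_mem_erase hv))
      _ = (Mᶜ.erase v0).card := by simp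
      _ = Mᶜ.card - 1 := Finset.card_erase_of_mem hv0F
  by_cases hMne : M = ∅
  · -- no arcs end in M at all
    have hall : A.filter (fun e => ¬ e.2 ∈ M) = A := by
      apply Finset.filter_true_of_mem
      intro e he
      simp [hMne]
    have hAle : A.card ≤ n - 1 := by
      rw [← hall]
      calc (A.filter fun e => ¬ e.2 ∈ M).card ≤ Mᶜ.card - 1 := hboundF
        _ ≤ n - 1 := by
            have := Finset.card_add_card_compl M
            omega
    have h4 : 4 ≤ n ^ 2 := by
      have : 2 * 2 ≤ n * n := Nat.mul_le_mul hn2 hn2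
      simpa [pow_two] using this
    have h1 : 1 ≤ n ^ 2 / 4 := (Nat.le_div_iff_mul_le (by norm_num)).mpr (by omega)
    omega
  · obtain ⟨m0, hm0M⟩ := Finset.nonempty_iff_ne_empty.mpr hMne
    -- a sink inside M
    obtain ⟨m, hmM, hmmin⟩ := (wf_adj_flip hdag).has_min (↑M : Set V) ⟨m0, by simpa using hm0M⟩
    have hmM' : m ∈ M := by simpa using hmM
    have hm0 : outDeg A m = 0 := by
      rw [outDeg, Finset.card_eq_zero, Finset.filter_eq_empty_iff]
      intro e heA he1
      have he2M : e.2 ∈ M := hMsucc hmM' (by rw [← he1]; simpa [Prod.mk.eta] using heA)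
      exact hmmin e.2 (by simpa using he2M)
        (show Function.swap (ArcAdj A) e.2 m by
          rw [Function.swap]; show ArcAdj A m e.2
          rw [ArcAdj, ← he1, Prod.mk.eta]; exact heA)
    -- bound on arcs starting in M
    have hboundM : ((A.filter fun e => e.2 ∈ M).filter fun e => e.1 ∈ M).card ≤ M.card - 1 := by
      have h1 : ((A.filter fun e => e.2 ∈ M).filter fun e => e.1 ∈ M).card =
          ∑ v ∈ M, (((A.filter fun e => e.2 ∈ M).filter fun e => e.1 ∈ M).filter
            fun e => e.1 = v).card :=
        Finset.card_eq_sum_card_fiberwise (by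
          intro e he
          exact (Finset.mem_filter.mp he).2)
      have h2 : ∀ v ∈ M, (((A.filter fun e => e.2 ∈ M).filter fun e => e.1 ∈ M).filter
          fun e => e.1 = v).card ≤ outDeg A v := by
        intro v hv
        apply Finset.card_le_card
        intro e he
        simp only [Finset.mem_filter] at he ⊢
        exact ⟨he.1.1.1, he.2⟩
      calc ((A.filter fun e => e.2 ∈ M).filter fun e => e.1 ∈ M).card
          ≤ ∑ v ∈ M, outDeg A v := h1 ▸ Finset.sum_le_sum h2
        _ = ∑ v ∈ M.erase m, outDeg A v := (Finset.sum_erase _ hm0).symm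
        _ ≤ ∑ _v ∈ M.erase m, 1 :=
            Finset.sum_le_sum (fun v hv => hMdeg v (Finset.mem_of_mem_erase hv))
        _ = (M.erase m).card := by simp
        _ = M.card - 1 := Finset.card_erase_of_mem hmM'
    -- bound on arcs from Mᶜ to M
    have hboundFM : ((A.filter fun e => e.2 ∈ M).filter fun e => ¬ e.1 ∈ M).card ≤
        Mᶜ.card * M.card := by
      have : ((A.filter fun e => e.2 ∈ M).filter fun e => ¬ e.1 ∈ M) ⊆ Mᶜ ×ˢ M := by
        intro e he
        simp only [Finset.mem_filter] at he
        exact Finset.mem_product.mpr ⟨Finset.mem_compl.mpr he.2, he.1.2⟩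
      calc _ ≤ (Mᶜ ×ˢ M).card := Finset.card_le_card this
        _ = Mᶜ.card * M.card := Finset.card_product _ _
    -- combine
    have hsplit1 : (A.filter fun e => e.2 ∈ M).card + (A.filter fun e => ¬ e.2 ∈ M).card
        = A.card := Finset.card_filter_add_card_filter_not _
    have hsplit2 : ((A.filter fun e => e.2 ∈ M).filter fun e => e.1 ∈ M).card +
        ((A.filter fun e => e.2 ∈ M).filter fun e => ¬ e.1 ∈ M).card
        = (A.filter fun e => e.2 ∈ M).card := Finset.card_filter_add_card_filter_not _
    have hcompl : M.card + Mᶜ.card = n := Finset.card_add_card_compl M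
    have hFpos : 1 ≤ Mᶜ.card := Finset.card_pos.mpr ⟨v0, hv0F⟩
    have hMpos : 1 ≤ M.card := Finset.card_pos.mpr ⟨m, hmM'⟩
    have hprod : Mᶜ.card * M.card ≤ n ^ 2 / 4 := by
      rw [Nat.le_div_iff_mul_le (by norm_num)]
      have h2 := two_mul_le_add_sq Mᶜ.card M.card
      have hexp : n ^ 2 = (M.card + Mᶜ.card) ^ 2 := by rw [hcompl]
      nlinarith [h2, hexp]
    obtain ⟨q, hq⟩ : ∃ q, n ^ 2 / 4 = q := ⟨_, rfl⟩
    obtain ⟨k, hk⟩ : ∃ k, Mᶜ.card * M.card = k := ⟨_, rfl⟩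
    rw [hq] at hprod ⊢
    rw [hk] at hprod hboundFM
    omega
end

section
/- For every even integer n ≥ 2 there exists a funnel D = (V,A) with |V| = n vertices and exactly |A| = n²/4 + n − 2 arcs; hence the bound |A| ≤ |V|²/4 + |V| − 2 for funnels is sharp. -/
variable {V : Type*} [Fintype V] [DecidableEq V]

section ListAux
variable {α : Type*}

lemma arcsOf_cons_cons (a b : α) (t : List α) :
    arcsOf (a :: b :: t) = (a, b) :: arcsOf (b :: t) := rfl

lemma mem_arcsOf_s6 : ∀ {p : List α} {x y : α},
    (x, y) ∈ arcsOf p ↔ ∃ l r, p = l ++ x :: y :: r := by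
  intro p
  induction p with
  | nil => intro x y; constructor
           · intro h; simp [arcsOf] at h
           · rintro ⟨l, r, h⟩; cases l <;> simp at h
  | cons a t ih =>
    intro x y
    cases t with
    | nil =>
      constructor
      · intro h; simp [arcsOf] at h
      · rintro ⟨l, r, h⟩; cases l with
        | nil => simp at h
        | cons c l' => simp at h
    | cons b t' =>
      rw [arcsOf_cons_cons]
      constructor
      · intro h
        rcases List.mem_cons.1 h with h | h
        · obtain ⟨h1, h2⟩ := Prod.mk.injEq .. ▸ h
          exact ⟨[], t', by simp [← h1, ← h2]⟩
        · obtain ⟨l, r, hl⟩ := ih.1 h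
          exact ⟨a :: l, r, by simp [hl]⟩
      · rintro ⟨l, r, hl⟩
        cases l with
        | nil =>
          simp at hl
          obtain ⟨h1, h2, h3⟩ := hl
          subst h1; subst h2; subst h3
          exact List.mem_cons_self
        | cons c l' =>
          simp at hl
          exact List.mem_cons.2 (Or.inr (ih.2 ⟨l', r, hl.2⟩))

lemma chain'_mem_arcs {R : α → α → Prop} {p : List α} (h : List.Chain' R p)
    {x y : α} (hxy : (x, y) ∈ arcsOf p) : R x y := by
  obtain ⟨l, r, rfl⟩ := mem_arcsOf_s6.1 hxy
  have h2 := (List.isChain_append.1 h).2.1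
  exact (List.isChain_cons_cons.1 h2).1

lemma det_chain {R : α → α → Prop} {G S : α → Prop}
    (hpres : ∀ x y, G x → R x y → G y)
    (hdet : ∀ x y z, G x → R x y → R x z → y = z)
    (hstop : ∀ x y, S x → ¬ R x y) :
    ∀ (r : List α) (b : α) (r' : List α), G b →
      List.Chain' R (b :: r) → List.Chain' R (b :: r') →
      (∀ t, (b :: r).getLast? = some t → S t) →
      (∀ t, (b :: r').getLast? = some t → S t) → r = r' := by
  intro r
  induction r with
  | nil =>
    intro b r' hG hc hc' hS hS'
    cases r' with
    | nil => rfl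
    | cons y t =>
      exact absurd (List.isChain_cons_cons.1 hc').1 (hstop _ _ (hS b rfl))
  | cons x t ih =>
    intro b r' hG hc hc' hS hS'
    have hbx : R b x := (List.isChain_cons_cons.1 hc).1
    cases r' with
    | nil => exact absurd hbx (hstop _ _ (hS' b rfl))
    | cons x' t' =>
      have hbx' : R b x' := (List.isChain_cons_cons.1 hc').1
      have hxx : x = x' := hdet b x x' hG hbx hbx'
      subst hxx
      have := ih x t' (hpres b x hG hbx) (List.isChain_cons_cons.1 hc).2 (List.isChain_cons_cons.1 hc').2
        (fun u hu => hS u (by rwa [List.getLast?_cons_cons]))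
        (fun u hu => hS' u (by rwa [List.getLast?_cons_cons]))
      rw [this]

end ListAux


def Ar (n m : ℕ) : Finset (Fin n × Fin n) :=
  Finset.univ.filter fun e =>
    (e.1.val < m ∧ m ≤ e.2.val) ∨ (e.2.val = e.1.val + 1 ∧ (e.2.val < m ∨ m ≤ e.1.val))

lemma mem_Ar {n m : ℕ} {x y : Fin n} :
    (x, y) ∈ Ar n m ↔
      (x.val < m ∧ m ≤ y.val) ∨ (y.val = x.val + 1 ∧ (y.val < m ∨ m ≤ x.val)) := by
  simp [Ar]

lemma Ar_lt {n m : ℕ} {x y : Fin n} (h : (x, y) ∈ Ar n m) : x.val < y.val := by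
  rcases mem_Ar.1 h with ⟨h1, h2⟩ | ⟨h1, _⟩ <;> omega

lemma Ar_in_unique {n m : ℕ} {x y : Fin n} (h : (y, x) ∈ Ar n m) (hx : x.val < m) :
    y.val + 1 = x.val := by
  rcases mem_Ar.1 h with ⟨h1, h2⟩ | ⟨h1, _⟩ <;> omega

lemma Ar_out_unique {n m : ℕ} {x y : Fin n} (h : (x, y) ∈ Ar n m) (hx : m ≤ x.val) :
    y.val = x.val + 1 := by
  rcases mem_Ar.1 h with ⟨h1, h2⟩ | ⟨h1, _⟩ <;> omega

lemma no_in_of_source {n : ℕ} {A : Finset (Fin n × Fin n)} {s : Fin n} (h : IsSource A s)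
    {u : Fin n} (hu : (u, s) ∈ A) : False := by
  have hmem : (u, s) ∈ A.filter fun e => e.2 = s := Finset.mem_filter.2 ⟨hu, rfl⟩
  rw [IsSource, inDeg, Finset.card_eq_zero] at h
  rw [h] at hmem
  exact absurd hmem (Finset.notMem_empty _)

lemma no_out_of_sink {n : ℕ} {A : Finset (Fin n × Fin n)} {s : Fin n} (h : IsSink A s)
    {u : Fin n} (hu : (s, u) ∈ A) : False := by
  have hmem : (s, u) ∈ A.filter fun e => e.1 = s := Finset.mem_filter.2 ⟨hu, rfl⟩
  rw [IsSink, outDeg, Finset.card_eq_zero] at h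
  rw [h] at hmem
  exact absurd hmem (Finset.notMem_empty _)

lemma source_val {n m : ℕ} (hn : n = m + m) (hm : 1 ≤ m) {s : Fin n}
    (h : IsSource (Ar n m) s) : s.val = 0 := by
  by_contra hs
  by_cases hsm : s.val < m
  · have hlt : s.val - 1 < n := by omega
    refine no_in_of_source h (u := ⟨s.val - 1, hlt⟩) (mem_Ar.2 (Or.inr ⟨?_, Or.inl hsm⟩))
    simp; omega
  · have h0 : (0 : ℕ) < n := by omega
    exact no_in_of_source h (u := ⟨0, h0⟩) (mem_Ar.2 (Or.inl ⟨by simp; omega, by omega⟩))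

lemma sink_val {n m : ℕ} (hn : n = m + m) (hm : 1 ≤ m) {t : Fin n}
    (h : IsSink (Ar n m) t) : t.val = n - 1 := by
  by_contra ht
  have htn : t.val < n := t.isLt
  by_cases htm : t.val < m
  · have hlt : m < n := by omega
    exact no_out_of_sink h (u := ⟨m, hlt⟩) (mem_Ar.2 (Or.inl ⟨htm, by simp⟩))
  · have hlt : t.val + 1 < n := by omega
    refine no_out_of_sink h (u := ⟨t.val + 1, hlt⟩) (mem_Ar.2 (Or.inr ⟨by simp, Or.inr ?_⟩))
    omega


lemma exists_cross {n m : ℕ} {R : Fin n → Fin n → Prop} :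
    ∀ (p : List (Fin n)) (x : Fin n), List.Chain' R (x :: p) → x.val < m →
      (∀ t, (x :: p).getLast? = some t → m ≤ t.val) →
      ∃ a b, (a, b) ∈ arcsOf (x :: p) ∧ a.val < m ∧ m ≤ b.val := by
  intro p
  induction p with
  | nil =>
    intro x _ hx ht
    have := ht x rfl
    omega
  | cons y t ih =>
    intro x hc hx ht
    by_cases hy : m ≤ y.val
    · exact ⟨x, y, by rw [arcsOf_cons_cons]; exact List.mem_cons_self, hx, hy⟩
    · obtain ⟨a, b, hab, h1, h2⟩ := ih y (List.isChain_cons_cons.1 hc).2 (by omega)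
        (fun t' h => ht t' (by rw [List.getLast?_cons_cons]; exact h))
      exact ⟨a, b, by rw [arcsOf_cons_cons]; exact List.mem_cons.2 (Or.inr hab), h1, h2⟩

lemma path_unique {n m : ℕ} (hn : n = m + m) (hm : 1 ≤ m) {a b : Fin n}
    (ha : a.val < m) (hb : m ≤ b.val) :
    ∀ p q, IsSourceSinkPath (Ar n m) p → (a, b) ∈ arcsOf p →
      IsSourceSinkPath (Ar n m) q → (a, b) ∈ arcsOf q → p = q := by
  have hpresF : ∀ x y : Fin n, m ≤ x.val → ArcAdj (Ar n m) x y → m ≤ y.val := by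
    intro x y hx hxy
    have := Ar_out_unique hxy hx; omega
  have hdetF : ∀ x y z : Fin n, m ≤ x.val → ArcAdj (Ar n m) x y → ArcAdj (Ar n m) x z →
      y = z := by
    intro x y z hx h1 h2
    have e1 := Ar_out_unique h1 hx
    have e2 := Ar_out_unique h2 hx
    exact Fin.ext (by omega)
  have hstopF : ∀ x y : Fin n, x.val = n - 1 → ¬ ArcAdj (Ar n m) x y := by
    intro x y hx hxy
    have := Ar_lt hxy
    have := y.isLt
    omega
  have hpresB : ∀ x y : Fin n, x.val < m → flip (ArcAdj (Ar n m)) x y → y.val < m := by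
    intro x y hx hxy
    have := Ar_in_unique hxy hx; omega
  have hdetB : ∀ x y z : Fin n, x.val < m → flip (ArcAdj (Ar n m)) x y →
      flip (ArcAdj (Ar n m)) x z → y = z := by
    intro x y z hx h1 h2
    have e1 := Ar_in_unique h1 hx
    have e2 := Ar_in_unique h2 hx
    exact Fin.ext (by omega)
  have hstopB : ∀ x y : Fin n, x.val = 0 → ¬ flip (ArcAdj (Ar n m)) x y := by
    intro x y hx hxy
    have := Ar_lt hxy
    omega
  intro p q hp hpm hq hqm
  obtain ⟨l₁, r₁, rfl⟩ := mem_arcsOf_s6.1 hpm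
  obtain ⟨l₂, r₂, rfl⟩ := mem_arcsOf_s6.1 hqm
  obtain ⟨-, hpc, -, ⟨s₁, hs₁, hs₁src⟩, ⟨t₁, ht₁, ht₁snk⟩⟩ := hp
  obtain ⟨-, hqc, -, ⟨s₂, hs₂, hs₂src⟩, ⟨t₂, ht₂, ht₂snk⟩⟩ := hq
  -- suffixes
  have hsufc₁ : List.Chain' (ArcAdj (Ar n m)) (b :: r₁) :=
    (List.isChain_cons_cons.1 (List.isChain_append.1 hpc).2.1).2
  have hsufc₂ : List.Chain' (ArcAdj (Ar n m)) (b :: r₂) :=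
    (List.isChain_cons_cons.1 (List.isChain_append.1 hqc).2.1).2
  have hlast₁ : ∀ u, (b :: r₁).getLast? = some u → u.val = n - 1 := by
    intro u hu
    have : (l₁ ++ a :: b :: r₁).getLast? = some u := by
      rw [List.getLast?_append_cons, List.getLast?_cons_cons]; exact hu
    rw [ht₁] at this
    exact (Option.some_injective _ this) ▸ sink_val hn hm ht₁snk
  have hlast₂ : ∀ u, (b :: r₂).getLast? = some u → u.val = n - 1 := by
    intro u hu
    have : (l₂ ++ a :: b :: r₂).getLast? = some u := by
      rw [List.getLast?_append_cons, List.getLast?_cons_cons]; exact hu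
    rw [ht₂] at this
    exact (Option.some_injective _ this) ▸ sink_val hn hm ht₂snk
  have hr : r₁ = r₂ := det_chain hpresF hdetF hstopF r₁ b r₂ hb hsufc₁ hsufc₂ hlast₁ hlast₂
  -- prefixes, via reversal
  have hrev₁ : List.Chain' (flip (ArcAdj (Ar n m))) ((l₁ ++ a :: b :: r₁).reverse) := by
    exact List.isChain_reverse.2 hpc
  have hrev₂ : List.Chain' (flip (ArcAdj (Ar n m))) ((l₂ ++ a :: b :: r₂).reverse) := by
    exact List.isChain_reverse.2 hqc
  have hre₁ : (l₁ ++ a :: b :: r₁).reverse = (r₁.reverse ++ [b]) ++ a :: l₁.reverse := by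
    simp
  have hre₂ : (l₂ ++ a :: b :: r₂).reverse = (r₂.reverse ++ [b]) ++ a :: l₂.reverse := by
    simp
  rw [hre₁] at hrev₁
  rw [hre₂] at hrev₂
  have hpc₁ : List.Chain' (flip (ArcAdj (Ar n m))) (a :: l₁.reverse) :=
    (List.isChain_append.1 hrev₁).2.1
  have hpc₂ : List.Chain' (flip (ArcAdj (Ar n m))) (a :: l₂.reverse) :=
    (List.isChain_append.1 hrev₂).2.1
  have hhead₁ : ∀ u, (a :: l₁.reverse).getLast? = some u → u.val = 0 := by
    intro u hu
    have h1 : (l₁ ++ [a]).head? = some u := by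
      rw [← List.getLast?_reverse]
      simpa using hu
    have h2 : (l₁ ++ a :: b :: r₁).head? = some u := by
      have : l₁ ++ a :: b :: r₁ = (l₁ ++ [a]) ++ b :: r₁ := by simp
      rw [this, List.head?_append_of_ne_nil _ (by simp)]
      exact h1
    rw [hs₁] at h2
    exact (Option.some_injective _ h2) ▸ source_val hn hm hs₁src
  have hhead₂ : ∀ u, (a :: l₂.reverse).getLast? = some u → u.val = 0 := by
    intro u hu
    have h1 : (l₂ ++ [a]).head? = some u := by
      rw [← List.getLast?_reverse]
      simpa using hu
    have h2 : (l₂ ++ a :: b :: r₂).head? = some u := by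
      have : l₂ ++ a :: b :: r₂ = (l₂ ++ [a]) ++ b :: r₂ := by simp
      rw [this, List.head?_append_of_ne_nil _ (by simp)]
      exact h1
    rw [hs₂] at h2
    exact (Option.some_injective _ h2) ▸ source_val hn hm hs₂src
  have hl : l₁.reverse = l₂.reverse :=
    det_chain hpresB hdetB hstopB l₁.reverse a l₂.reverse ha hpc₁ hpc₂ hhead₁ hhead₂
  have hl' : l₁ = l₂ := by
    have := congrArg List.reverse hl
    simpa using this
  rw [hl', hr]


lemma Ar_isDAG {n m : ℕ} : IsDAG (Ar n m) := by
  intro v hv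
  have key : ∀ x y : Fin n, Relation.TransGen (ArcAdj (Ar n m)) x y → x.val < y.val := by
    intro x y h
    induction h with
    | single h => exact Ar_lt h
    | tail _ h ih => exact ih.trans (Ar_lt h)
  exact absurd (key v v hv) (by omega)

lemma Ar_isFunnel {n m : ℕ} (hn : n = m + m) (hm : 1 ≤ m) : IsFunnel (Ar n m) := by
  intro p hp
  obtain ⟨hlen, hc, hnd, ⟨s, hs, hssrc⟩, ⟨t, ht, htsnk⟩⟩ := hp
  cases p with
  | nil => simp at hs
  | cons x p' =>
    have hxs : x = s := by simpa using hs
    have hx0 : x.val < m := by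
      have := source_val hn hm hssrc
      omega
    have hlastbig : ∀ u : Fin n, (x :: p').getLast? = some u → m ≤ u.val := by
      intro u hu
      rw [ht] at hu
      have hv := sink_val hn hm htsnk
      obtain rfl : t = u := Option.some_injective _ hu
      omega
    obtain ⟨a, b, hab, ha, hb⟩ := exists_cross p' x hc hx0 hlastbig
    refine ⟨(a, b), hab, (x :: p'), ⟨⟨hlen, hc, hnd, ⟨s, hs, hssrc⟩, ⟨t, ht, htsnk⟩⟩, hab⟩,
      fun q hq => path_unique hn hm ha hb q (x :: p') hq.1 hq.2
        ⟨hlen, hc, hnd, ⟨s, hs, hssrc⟩, ⟨t, ht, htsnk⟩⟩ hab⟩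

lemma card_filter' {α : Type*} (s : Finset α) (p : α → Prop) [DecidablePred p] :
    (s.filter p).card = ∑ x ∈ s, if p x then 1 else 0 := by
  rw [Finset.card_eq_sum_ones, Finset.sum_filter]

lemma Ar_card {n m : ℕ} (hn : n = m + m) (hm : 1 ≤ m) :
    (Ar n m).card = m * m + (m + m) - 2 := by
  classical
  have step1 : (Ar n m).card
      = ∑ x : Fin n, ∑ y : Fin n,
          (if (x.val < m ∧ m ≤ y.val) ∨ (y.val = x.val + 1 ∧ (y.val < m ∨ m ≤ x.val))
           then 1 else 0) := by
    rw [Ar, card_filter', Fintype.sum_prod_type]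
  have inner : ∀ x : ℕ, (∑ y : Fin n,
      (if (x < m ∧ m ≤ y.val) ∨ (y.val = x + 1 ∧ (y.val < m ∨ m ≤ x)) then 1 else 0))
      = ((Finset.range n).filter
          (fun y => (x < m ∧ m ≤ y) ∨ (y = x + 1 ∧ (y < m ∨ m ≤ x)))).card := by
    intro x
    rw [Fin.sum_univ_eq_sum_range
      (fun y => if (x < m ∧ m ≤ y) ∨ (y = x + 1 ∧ (y < m ∨ m ≤ x)) then 1 else 0) n,
      card_filter']
  have innerval : ∀ x : ℕ, x < n →
      ((Finset.range n).filter
          (fun y => (x < m ∧ m ≤ y) ∨ (y = x + 1 ∧ (y < m ∨ m ≤ x)))).card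
      = if x < m then (if x + 1 < m then m + 1 else m) else (if x + 1 < n then 1 else 0) := by
    intro x hx
    by_cases h1 : x < m
    · by_cases h2 : x + 1 < m
      · have he : (Finset.range n).filter
            (fun y => (x < m ∧ m ≤ y) ∨ (y = x + 1 ∧ (y < m ∨ m ≤ x)))
            = insert (x + 1) (Finset.Ico m n) := by
          ext b
          simp only [Finset.mem_filter, Finset.mem_range, Finset.mem_insert, Finset.mem_Ico]
          omega
        rw [he, Finset.card_insert_of_notMem (by simp only [Finset.mem_Ico]; omega),
          Nat.card_Ico]
        simp only [h1, h2, if_true]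
        omega
      · have he : (Finset.range n).filter
            (fun y => (x < m ∧ m ≤ y) ∨ (y = x + 1 ∧ (y < m ∨ m ≤ x)))
            = Finset.Ico m n := by
          ext b
          simp only [Finset.mem_filter, Finset.mem_range, Finset.mem_Ico]
          omega
        rw [he, Nat.card_Ico]
        simp only [h1, h2, if_true, if_false]
        omega
    · by_cases hxn : x + 1 < n
      · have he : (Finset.range n).filter
            (fun y => (x < m ∧ m ≤ y) ∨ (y = x + 1 ∧ (y < m ∨ m ≤ x)))
            = {x + 1} := by
          ext b
          simp only [Finset.mem_filter, Finset.mem_range, Finset.mem_singleton]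
          omega
        rw [he, Finset.card_singleton]
        simp only [h1, hxn, if_true, if_false]
      · have he : (Finset.range n).filter
            (fun y => (x < m ∧ m ≤ y) ∨ (y = x + 1 ∧ (y < m ∨ m ≤ x)))
            = ∅ := by
          ext b
          simp only [Finset.mem_filter, Finset.mem_range, Finset.notMem_empty, iff_false]
          omega
        rw [he, Finset.card_empty]
        simp only [h1, hxn, if_false]
  have step2 : (Ar n m).card = ∑ x ∈ Finset.range n,
      (if x < m then (if x + 1 < m then m + 1 else m) else (if x + 1 < n then 1 else 0)) := by
    rw [step1]
    rw [Fin.sum_univ_eq_sum_range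
      (fun x => ∑ y : Fin n,
        (if (x < m ∧ m ≤ y.val) ∨ (y.val = x + 1 ∧ (y.val < m ∨ m ≤ x)) then 1 else 0)) n]
    refine Finset.sum_congr rfl fun x hx => ?_
    rw [inner x, innerval x (Finset.mem_range.1 hx)]
  rw [step2]
  have hsplit : ∑ x ∈ Finset.range n,
      (if x < m then (if x + 1 < m then m + 1 else m) else (if x + 1 < n then 1 else 0))
      = ∑ x ∈ Finset.Ico 0 m,
          (if x < m then (if x + 1 < m then m + 1 else m) else (if x + 1 < n then 1 else 0))
        + ∑ x ∈ Finset.Ico m n,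
          (if x < m then (if x + 1 < m then m + 1 else m) else (if x + 1 < n then 1 else 0)) := by
    rw [Finset.range_eq_Ico]
    exact (Finset.sum_Ico_consecutive _ (Nat.zero_le m) (by omega)).symm
  rw [hsplit]
  have hpart1 : ∑ x ∈ Finset.Ico 0 m,
      (if x < m then (if x + 1 < m then m + 1 else m) else (if x + 1 < n then 1 else 0))
      = m * m + (m - 1) := by
    rw [show Finset.Ico 0 m = Finset.range m by rw [Finset.range_eq_Ico]]
    have hcongr : ∀ x ∈ Finset.range m,
        (if x < m then (if x + 1 < m then m + 1 else m) else (if x + 1 < n then 1 else 0))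
        = m + (if x + 1 < m then 1 else 0) := by
      intro x hx
      have hxm := Finset.mem_range.1 hx
      simp only [hxm, if_true]
      by_cases h : x + 1 < m <;> simp [h]
    rw [Finset.sum_congr rfl hcongr, Finset.sum_add_distrib, Finset.sum_const,
      Finset.card_range, smul_eq_mul, ← card_filter']
    have he : (Finset.range m).filter (fun x => x + 1 < m) = Finset.range (m - 1) := by
      ext b
      simp only [Finset.mem_filter, Finset.mem_range]
      omega
    rw [he, Finset.card_range]
  have hpart2 : ∑ x ∈ Finset.Ico m n,
      (if x < m then (if x + 1 < m then m + 1 else m) else (if x + 1 < n then 1 else 0))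
      = m - 1 := by
    have hcongr : ∀ x ∈ Finset.Ico m n,
        (if x < m then (if x + 1 < m then m + 1 else m) else (if x + 1 < n then 1 else 0))
        = if x + 1 < n then 1 else 0 := by
      intro x hx
      have hxm := (Finset.mem_Ico.1 hx).1
      simp only [show ¬ x < m by omega, if_false]
    rw [Finset.sum_congr rfl hcongr, ← card_filter']
    have he : (Finset.Ico m n).filter (fun x => x + 1 < n) = Finset.Ico m (n - 1) := by
      ext b
      simp only [Finset.mem_filter, Finset.mem_Ico]
      omega
    rw [he, Nat.card_Ico]
    omega
  rw [hpart1, hpart2]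
  omega

/-- For every even `n ≥ 2` there is a funnel on `n` vertices with
exactly `n²/4 + n - 2` arcs, so the arc bound for funnels is sharp. -/
theorem funnel_card_arcs_sharp (n : ℕ) (h2 : 2 ≤ n) (hev : Even n) :
    ∃ A : Finset (Fin n × Fin n), IsDAG A ∧ IsFunnel A ∧
      A.card = n ^ 2 / 4 + n - 2 := by
  obtain ⟨m, hn⟩ := hev
  have hm : 1 ≤ m := by omega
  refine ⟨Ar n m, Ar_isDAG, Ar_isFunnel hn hm, ?_⟩
  rw [Ar_card hn hm]
  have h4 : n ^ 2 / 4 = m * m := by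
    have he : n ^ 2 = m * m * 4 := by subst hn; ring
    rw [he, Nat.mul_div_cancel _ (by norm_num : (0:ℕ) < 4)]
  rw [h4, hn]
end

section
/- If H_1, ..., H_k are subgraphs of a DAG D whose arc sets are pairwise disjoint, then the sum over i of the arc-deletion distance to a funnel of H_i is at most the arc-deletion distance to a funnel of D. -/
variable {V : Type*} [Fintype V] [DecidableEq V]

set_option linter.unusedSectionVars false
set_option linter.unnecessarySimpa false

section Helpers

section Helpers

lemma head?_append_left {α : Type*} (l m : List α) (h : l ≠ []) : (l ++ m).head? = l.head? := by
  cases l with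
  | nil => exact absurd rfl h
  | cons a t => rfl

lemma getLast?_append_right {α : Type*} : ∀ (l m : List α), m ≠ [] → (l ++ m).getLast? = m.getLast?
  | [], m, _ => rfl
  | a :: t, m, h => by
    have h2 : t ++ m ≠ [] := fun he => h (List.append_eq_nil_iff.mp he).2
    cases htm : t ++ m with
    | nil => exact absurd htm h2
    | cons b r =>
      have he : (a :: t) ++ m = a :: b :: r := by rw [List.cons_append, htm]
      rw [he, List.getLast?_cons_cons, ← htm, getLast?_append_right t m h]

lemma arcsOf_nil : arcsOf ([] : List V) = [] := rfl
lemma arcsOf_single (a : V) : arcsOf [a] = [] := rfl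
lemma arcsOf_cons_cons_s8 (x y : V) (t : List V) :
    arcsOf (x :: y :: t) = (x, y) :: arcsOf (y :: t) := rfl

lemma arcsOf_append : ∀ (l1 : List V) (a : V) (l2 : List V),
    arcsOf (l1 ++ a :: l2) = arcsOf (l1 ++ [a]) ++ arcsOf (a :: l2)
  | [], a, l2 => rfl
  | [b], a, l2 => rfl
  | b :: c :: t, a, l2 => by
    show (b, c) :: arcsOf ((c :: t) ++ a :: l2)
        = ((b, c) :: arcsOf ((c :: t) ++ [a])) ++ arcsOf (a :: l2)
    rw [arcsOf_append (c :: t) a l2]; rfl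

lemma mem_arcsOf_append_left : ∀ (l m : List V) (e : V × V), e ∈ arcsOf l → e ∈ arcsOf (l ++ m)
  | [], _, _, h => absurd h (by simp [arcsOf])
  | [_], _, _, h => absurd h (by simp [arcsOf])
  | x :: y :: t, m, e, h => by
    show e ∈ arcsOf (x :: y :: (t ++ m))
    rw [arcsOf_cons_cons_s8] at h ⊢
    rcases List.mem_cons.mp h with h | h
    · exact h ▸ List.mem_cons_self
    · exact List.mem_cons_of_mem _ (mem_arcsOf_append_left (y :: t) m e h)

lemma mem_arcsOf_cons (x : V) (l : List V) (e : V × V) (h : e ∈ arcsOf l) :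
    e ∈ arcsOf (x :: l) := by
  cases l with
  | nil => simp [arcsOf] at h
  | cons c t => exact List.mem_cons_of_mem _ h

lemma mem_arcsOf_append_right : ∀ (l m : List V) (e : V × V), e ∈ arcsOf m → e ∈ arcsOf (l ++ m)
  | [], _, _, h => h
  | x :: t, m, e, h => mem_arcsOf_cons x (t ++ m) e (mem_arcsOf_append_right t m e h)

lemma arcsOf_decomp : ∀ (q : List V) (e : V × V), e ∈ arcsOf q →
    ∃ m1 m2, q = m1 ++ e.1 :: e.2 :: m2
  | [], _, h => absurd h (by simp [arcsOf])
  | [_], _, h => absurd h (by simp [arcsOf])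
  | x :: y :: t, e, h => by
    rw [arcsOf_cons_cons_s8] at h
    rcases List.mem_cons.mp h with h | h
    · exact ⟨[], t, by simp [h]⟩
    · obtain ⟨m1, m2, hm⟩ := arcsOf_decomp (y :: t) e h
      exact ⟨x :: m1, m2, by rw [List.cons_append, ← hm]⟩

lemma chain_reach {R : V → V → Prop} : ∀ (h : V) (t : List V), List.Chain' R (h :: t) →
    ∀ y ∈ h :: t, Relation.ReflTransGen R h y
  | h, [], _, y, hy => by
    rw [List.mem_singleton] at hy; exact hy ▸ Relation.ReflTransGen.refl
  | h, c :: t, hc, y, hy => by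
    rcases List.mem_cons.mp hy with rfl | hy
    · exact Relation.ReflTransGen.refl
    · exact Relation.ReflTransGen.head (List.isChain_cons_cons.mp hc).1
        (chain_reach c t (List.isChain_cons_cons.mp hc).2 y hy)

lemma chain'_nodup {A : Finset (V × V)} (hd : IsDAG A) :
    ∀ (p : List V), List.Chain' (ArcAdj A) p → p.Nodup
  | [], _ => List.nodup_nil
  | x :: t, h => by
    refine List.nodup_cons.mpr ⟨?_, chain'_nodup hd t h.tail⟩
    intro hx
    cases t with
    | nil => simp at hx
    | cons c t' =>
      exact hd x (Relation.TransGen.head' (List.isChain_cons_cons.mp h).1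
        (chain_reach c t' (List.isChain_cons_cons.mp h).2 x hx))

lemma outDeg_det {A : Finset (V × V)} {x y z : V} (h : outDeg A x ≤ 1)
    (h1 : (x, y) ∈ A) (h2 : (x, z) ∈ A) : y = z := by
  have := Finset.card_le_one.mp h (x, y) (Finset.mem_filter.mpr ⟨h1, rfl⟩)
    (x, z) (Finset.mem_filter.mpr ⟨h2, rfl⟩)
  exact congrArg Prod.snd this

lemma inDeg_det {A : Finset (V × V)} {x y z : V} (h : inDeg A x ≤ 1)
    (h1 : (y, x) ∈ A) (h2 : (z, x) ∈ A) : y = z := by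
  have := Finset.card_le_one.mp h (y, x) (Finset.mem_filter.mpr ⟨h1, rfl⟩)
    (z, x) (Finset.mem_filter.mpr ⟨h2, rfl⟩)
  exact congrArg Prod.fst this

lemma no_out_arc {A : Finset (V × V)} {t y : V} (h : outDeg A t = 0) (hy : (t, y) ∈ A) : False := by
  have : (t, y) ∈ A.filter fun e => e.1 = t := Finset.mem_filter.mpr ⟨hy, rfl⟩
  rw [Finset.card_eq_zero.mp h] at this
  exact absurd this (Finset.notMem_empty _)

lemma no_in_arc {A : Finset (V × V)} {s y : V} (h : inDeg A s = 0) (hy : (y, s) ∈ A) : False := by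
  have : (y, s) ∈ A.filter fun e => e.2 = s := Finset.mem_filter.mpr ⟨hy, rfl⟩
  rw [Finset.card_eq_zero.mp h] at this
  exact absurd this (Finset.notMem_empty _)

lemma chain_unique {R : V → V → Prop} : ∀ (X X' : List V), List.Chain' R X → List.Chain' R X' →
    X.head? = X'.head? → X ≠ [] →
    (∀ x ∈ X, ∀ y z, R x y → R x z → y = z) →
    (∀ t, X.getLast? = some t → ∀ y, ¬ R t y) →
    (∀ t, X'.getLast? = some t → ∀ y, ¬ R t y) → X = X' := by
  intro X
  induction X with
  | nil => intro X' _ _ _ hne _ _ _; exact absurd rfl hne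
  | cons x T ih =>
    intro X' hc hc' hh _ hdet hlast hlast'
    cases X' with
    | nil => simp at hh
    | cons x' T' =>
      have hx : x = x' := by simpa using hh
      subst hx
      cases T with
      | nil =>
        cases T' with
        | nil => rfl
        | cons c T2' => exact absurd (List.isChain_cons_cons.mp hc').1 (hlast x rfl c)
      | cons c T2 =>
        have hxc : R x c := (List.isChain_cons_cons.mp hc).1
        cases T' with
        | nil => exact absurd hxc (hlast' x rfl c)
        | cons c' T2' =>
          have hcc : c = c' := hdet x (List.mem_cons_self) c c' hxc (List.isChain_cons_cons.mp hc').1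
          subst hcc
          have hT : c :: T2 = c :: T2' := by
            refine ih (c :: T2') (List.isChain_cons_cons.mp hc).2 (List.isChain_cons_cons.mp hc').2 rfl
              (List.cons_ne_nil _ _) (fun y hy => hdet y (List.mem_cons_of_mem _ hy))
              (fun t ht => hlast t (by rw [List.getLast?_cons_cons]; exact ht))
              (fun t ht => hlast' t (by rw [List.getLast?_cons_cons]; exact ht))
          rw [hT]

end Helpers

section Part2
variable {A : Finset (V × V)}

def IsBad (A : Finset (V × V)) : Prop :=
  ∃ u w, 2 ≤ inDeg A u ∧ 2 ≤ outDeg A w ∧ Relation.ReflTransGen (ArcAdj A) u w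

lemma split_exists (hb : ¬ IsBad A) : ∀ (rest : List V) (x : V),
    List.Chain' (ArcAdj A) (x :: rest) → rest ≠ [] → inDeg A x ≤ 1 →
    (∀ t, (x :: rest).getLast? = some t → outDeg A t = 0) →
    ∃ l1 a b l2, x :: rest = l1 ++ a :: b :: l2 ∧
      (∀ y ∈ l1 ++ [a], inDeg A y ≤ 1) ∧ (∀ y ∈ b :: l2, outDeg A y ≤ 1) := by
  intro rest
  induction rest with
  | nil => intro x _ hne; exact absurd rfl hne
  | cons w rest' ih =>
    intro x hc _ hx hlast
    rcases eq_or_ne rest' [] with rfl | hr'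
    · refine ⟨[], x, w, [], rfl, ?_, ?_⟩
      · intro y hy; rw [List.nil_append, List.mem_singleton] at hy; exact hy ▸ hx
      · intro y hy; rw [List.mem_singleton] at hy; subst hy
        rw [hlast y rfl]; exact Nat.zero_le 1
    · by_cases hw : inDeg A w ≤ 1
      · obtain ⟨l1, a, b, l2, hsp, hin, hout⟩ := ih w (List.isChain_cons_cons.mp hc).2 hr' hw
          (fun t ht => hlast t (by
            cases rest' with
            | nil => exact absurd rfl hr'
            | cons z zs => rw [List.getLast?_cons_cons]; exact ht))
        refine ⟨x :: l1, a, b, l2, by rw [List.cons_append, ← hsp], ?_, hout⟩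
        intro y hy
        rcases List.mem_cons.mp hy with rfl | hy
        · exact hx
        · exact hin y hy
      · push_neg at hw
        refine ⟨[], x, w, rest', rfl, ?_, ?_⟩
        · intro y hy; rw [List.nil_append, List.mem_singleton] at hy; exact hy ▸ hx
        · intro y hy
          by_contra hout
          push_neg at hout
          exact hb ⟨w, y, hw, hout, chain_reach w rest' (List.isChain_cons_cons.mp hc).2 y hy⟩

lemma private_of_split (p : List V) (hp : IsSourceSinkPath A p) (l1 l2 : List V) (a b : V)
    (hsplit : p = l1 ++ a :: b :: l2)
    (hin : ∀ y ∈ l1 ++ [a], inDeg A y ≤ 1)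
    (hout : ∀ y ∈ b :: l2, outDeg A y ≤ 1) : IsPrivate A (a, b) := by
  obtain ⟨hlen, hchain, hnodup, ⟨s, hs, hsrc⟩, ⟨t, ht, hsink⟩⟩ := hp
  have hassoc : (l1 ++ [a]) ++ b :: l2 = l1 ++ a :: b :: l2 := by simp
  have hmem : (a, b) ∈ arcsOf p := by
    rw [hsplit, arcsOf_append]
    exact List.mem_append_right _ (List.mem_cons_self)
  refine ⟨p, ⟨⟨hlen, hchain, hnodup, ⟨s, hs, hsrc⟩, ⟨t, ht, hsink⟩⟩, hmem⟩, ?_⟩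
  rintro q ⟨⟨hqlen, hqchain, hqnodup, ⟨s', hs', hsrc'⟩, ⟨t', ht', hsink'⟩⟩, heq⟩
  obtain ⟨m1, m2, hq2⟩ := arcsOf_decomp q (a, b) heq
  have hassoc' : (m1 ++ [a]) ++ b :: m2 = m1 ++ a :: b :: m2 := by simp
  -- forward uniqueness: b :: l2 = b :: m2
  have hfwd : b :: l2 = b :: m2 := by
    refine chain_unique (R := ArcAdj A) _ _ ?_ ?_ rfl (List.cons_ne_nil _ _) ?_ ?_ ?_
    · exact hchain.suffix ⟨l1 ++ [a], by rw [hassoc, ← hsplit]⟩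
    · exact hqchain.suffix ⟨m1 ++ [a], by rw [hassoc', ← hq2]⟩
    · exact fun x hx y z h1 h2 => outDeg_det (hout x hx) h1 h2
    · intro t0 ht0 y hy
      have : p.getLast? = some t0 := by
        rw [hsplit, ← hassoc, getLast?_append_right _ _ (List.cons_ne_nil _ _)]; exact ht0
      rw [ht] at this
      exact no_out_arc (Option.some_injective _ this ▸ hsink) hy
    · intro t0 ht0 y hy
      have : q.getLast? = some t0 := by
        rw [hq2, ← hassoc', getLast?_append_right _ _ (List.cons_ne_nil _ _)]; exact ht0
      rw [ht'] at this
      exact no_out_arc (Option.some_injective _ this ▸ hsink') hy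
  -- backward uniqueness: l1 ++ [a] = m1 ++ [a]
  have hbwd : l1 ++ [a] = m1 ++ [a] := by
    have hne : l1 ++ [a] ≠ [] := by simp
    have hne' : m1 ++ [a] ≠ [] := by simp
    apply List.reverse_injective
    refine chain_unique (R := flip (ArcAdj A)) _ _ ?_ ?_ ?_ ?_ ?_ ?_ ?_
    · exact List.isChain_reverse.mpr (hchain.prefix ⟨b :: l2, by rw [hassoc, ← hsplit]⟩)
    · exact List.isChain_reverse.mpr (hqchain.prefix ⟨b :: m2, by rw [hassoc', ← hq2]⟩)
    · rw [List.head?_reverse, List.head?_reverse, List.getLast?_concat, List.getLast?_concat]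
    · simpa using hne
    · intro x hx y z h1 h2
      rw [List.mem_reverse] at hx
      exact inDeg_det (hin x hx) h1 h2
    · intro s0 hs0 y hy
      rw [List.getLast?_reverse] at hs0
      have : p.head? = some s0 := by
        rw [hsplit, ← hassoc, head?_append_left _ _ hne]; exact hs0
      rw [hs] at this
      exact no_in_arc (Option.some_injective _ this ▸ hsrc) hy
    · intro s0 hs0 y hy
      rw [List.getLast?_reverse] at hs0
      have : q.head? = some s0 := by
        rw [hq2, ← hassoc', head?_append_left _ _ hne']; exact hs0
      rw [hs'] at this
      exact no_in_arc (Option.some_injective _ this ▸ hsrc') hy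
  rw [hq2, ← hassoc', ← hbwd, ← hfwd, hassoc, ← hsplit]

lemma funnel_of_not_bad (hb : ¬ IsBad A) : IsFunnel A := by
  intro p hp
  obtain ⟨hlen, hchain, hnodup, ⟨s, hs, hsrc⟩, ⟨t, ht, hsink⟩⟩ := hp
  cases p with
  | nil => simp at hs
  | cons x rest =>
    have hxs : x = s := by simpa using hs
    subst hxs
    have hr : rest ≠ [] := by
      intro h; rw [h] at hlen; simp at hlen
    obtain ⟨l1, a, b, l2, hsp, hin, hout⟩ := split_exists hb rest x hchain hr
      (by rw [show inDeg A x = 0 from hsrc]; exact Nat.zero_le 1)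
      (fun t0 ht0 => by rw [ht0] at ht; exact Option.some_injective _ ht ▸ hsink)
    refine ⟨(a, b), ?_, ?_⟩
    · rw [hsp, arcsOf_append]
      exact List.mem_append_right _ (List.mem_cons_self)
    · exact private_of_split (x :: rest)
        ⟨hlen, hchain, hnodup, ⟨x, hs, hsrc⟩, ⟨t, ht, hsink⟩⟩ l1 l2 a b hsp hin hout

end Part2

section Part3
variable {A : Finset (V × V)}

lemma rtg_list {u w : V} (h : Relation.ReflTransGen (ArcAdj A) u w) :
    ∃ q : List V, q.head? = some u ∧ q.getLast? = some w ∧ List.Chain' (ArcAdj A) q := by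
  induction h with
  | refl => exact ⟨[u], rfl, rfl, List.isChain_singleton u⟩
  | @tail b c hab hbc ih =>
    obtain ⟨q, h1, h2, h3⟩ := ih
    have hqne : q ≠ [] := by intro hq; rw [hq] at h1; simp at h1
    refine ⟨q ++ [c], ?_, List.getLast?_concat, ?_⟩
    · rw [head?_append_left _ _ hqne]; exact h1
    · refine List.IsChain.append h3 (List.isChain_singleton c) ?_
      intro x hx y hy
      rw [h2] at hx
      simp only [Option.mem_def, Option.some_inj] at hx
      simp only [List.head?_cons, Option.mem_def, Option.some_inj] at hy
      subst hx; subst hy; exact hbc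

lemma exists_sink_path (hd : IsDAG A) (v : V) :
    ∃ Q : List V, Q ≠ [] ∧ List.Chain' (ArcAdj A) Q ∧ Q.head? = some v ∧
      ∃ t, Q.getLast? = some t ∧ outDeg A t = 0 := by
  let r : V → V → Prop := fun a b => Relation.TransGen (ArcAdj A) b a
  have wf : WellFounded r := by
    haveI : IsTrans V r := ⟨fun a b c h1 h2 => Relation.TransGen.trans h2 h1⟩
    haveI : IsIrrefl V r := ⟨fun a h => hd a h⟩
    exact Finite.wellFounded_of_trans_of_irrefl r
  induction v using WellFounded.induction wf with
  | _ v ih =>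
    by_cases h0 : outDeg A v = 0
    · exact ⟨[v], List.cons_ne_nil _ _, List.isChain_singleton v, rfl, v, rfl, h0⟩
    · obtain ⟨⟨a, b⟩, he⟩ := Finset.card_pos.mp (Nat.pos_of_ne_zero h0)
      obtain ⟨hab, hav⟩ := Finset.mem_filter.mp he
      have hav' : a = v := hav
      have hvb : (v, b) ∈ A := by rw [← hav']; exact hab
      obtain ⟨Q, hQne, hQc, hQh, t, hQl, ht⟩ := ih b (Relation.TransGen.single hvb)
      cases Q with
      | nil => exact absurd rfl hQne
      | cons q0 Q' =>
        have hq0 : q0 = b := by simpa using hQh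
        refine ⟨v :: q0 :: Q', List.cons_ne_nil _ _,
          List.isChain_cons_cons.mpr ⟨by rw [hq0]; exact hvb, hQc⟩, rfl, t, ?_, ht⟩
        rw [List.getLast?_cons_cons]; exact hQl

lemma exists_source_path (hd : IsDAG A) (v : V) :
    ∃ P : List V, P ≠ [] ∧ List.Chain' (ArcAdj A) P ∧ P.getLast? = some v ∧
      ∃ s, P.head? = some s ∧ inDeg A s = 0 := by
  let r : V → V → Prop := fun a b => Relation.TransGen (ArcAdj A) a b
  have wf : WellFounded r := by
    haveI : IsTrans V r := ⟨fun a b c h1 h2 => Relation.TransGen.trans h1 h2⟩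
    haveI : IsIrrefl V r := ⟨fun a h => hd a h⟩
    exact Finite.wellFounded_of_trans_of_irrefl r
  induction v using WellFounded.induction wf with
  | _ v ih =>
    by_cases h0 : inDeg A v = 0
    · exact ⟨[v], List.cons_ne_nil _ _, List.isChain_singleton v, rfl, v, rfl, h0⟩
    · obtain ⟨⟨a, b⟩, he⟩ := Finset.card_pos.mp (Nat.pos_of_ne_zero h0)
      obtain ⟨hab, hbv⟩ := Finset.mem_filter.mp he
      have hbv' : b = v := hbv
      have hav : (a, v) ∈ A := by rw [← hbv']; exact hab
      obtain ⟨P, hPne, hPc, hPl, s, hPh, hs⟩ := ih a (Relation.TransGen.single hav)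
      refine ⟨P ++ [v], by simp, ?_, List.getLast?_concat, s, ?_, hs⟩
      · refine List.IsChain.append hPc (List.isChain_singleton v) ?_
        intro x hx y hy
        rw [hPl] at hx
        simp only [Option.mem_def, Option.some_inj] at hx
        simp only [List.head?_cons, Option.mem_def, Option.some_inj] at hy
        subst hx; subst hy; exact hav
      · rw [head?_append_left _ _ hPne]; exact hPh

lemma mk_ssp (hd : IsDAG A) (P q Q : List V) {u w x y : V}
    (hPne : P ≠ []) (hPc : List.Chain' (ArcAdj A) P)
    (hPs : ∃ s, P.head? = some s ∧ inDeg A s = 0) (hPl : P.getLast? = some y)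
    (hyu : (y, u) ∈ A)
    (hqc : List.Chain' (ArcAdj A) q) (hqh : q.head? = some u) (hql : q.getLast? = some w)
    (hwx : (w, x) ∈ A)
    (hQne : Q ≠ []) (hQc : List.Chain' (ArcAdj A) Q) (hQh : Q.head? = some x)
    (hQt : ∃ t, Q.getLast? = some t ∧ outDeg A t = 0) :
    IsSourceSinkPath A (P ++ (q ++ Q)) := by
  have hqne : q ≠ [] := by intro hq; rw [hq] at hqh; simp at hqh
  have hqQne : q ++ Q ≠ [] := by simp [hqne]
  have hchain : List.Chain' (ArcAdj A) (P ++ (q ++ Q)) := by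
    refine List.IsChain.append hPc (List.IsChain.append hqc hQc ?_) ?_
    · intro a ha b hb
      rw [hql] at ha; rw [hQh] at hb
      simp only [Option.mem_def, Option.some_inj] at ha hb
      subst ha; subst hb; exact hwx
    · intro a ha b hb
      rw [hPl] at ha
      rw [head?_append_left _ _ hqne, hqh] at hb
      simp only [Option.mem_def, Option.some_inj] at ha hb
      subst ha; subst hb; exact hyu
  refine ⟨?_, hchain, chain'_nodup hd _ hchain, ?_, ?_⟩
  · have h1 : 1 ≤ P.length := List.length_pos_iff.mpr hPne
    have h2 : 1 ≤ q.length := List.length_pos_iff.mpr hqne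
    rw [List.length_append, List.length_append]
    omega
  · obtain ⟨s, hs1, hs2⟩ := hPs
    exact ⟨s, by rw [head?_append_left _ _ hPne]; exact hs1, hs2⟩
  · obtain ⟨t, ht1, ht2⟩ := hQt
    refine ⟨t, ?_, ht2⟩
    rw [getLast?_append_right _ _ hqQne, getLast?_append_right _ _ hQne]
    exact ht1

lemma not_bad_of_funnel (hd : IsDAG A) (hf : IsFunnel A) : ¬ IsBad A := by
  rintro ⟨u, w, hu, hw, huw⟩
  obtain ⟨q, hqh, hql, hqc⟩ := rtg_list huw
  -- two in-arcs of u
  obtain ⟨e1, he1, e2, he2, hne12⟩ := Finset.one_lt_card.mp (lt_of_lt_of_le one_lt_two hu)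
  obtain ⟨he1A, he1u⟩ := Finset.mem_filter.mp he1
  obtain ⟨he2A, he2u⟩ := Finset.mem_filter.mp he2
  have hy1 : (e1.1, u) ∈ A := by rw [← he1u]; exact he1A
  have hy2 : (e2.1, u) ∈ A := by rw [← he2u]; exact he2A
  have hyne : e1.1 ≠ e2.1 := by
    intro h; exact hne12 (Prod.ext h (he1u.trans he2u.symm))
  -- two out-arcs of w
  obtain ⟨f1, hf1, f2, hf2, hnf12⟩ := Finset.one_lt_card.mp (lt_of_lt_of_le one_lt_two hw)
  obtain ⟨hf1A, hf1w⟩ := Finset.mem_filter.mp hf1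
  obtain ⟨hf2A, hf2w⟩ := Finset.mem_filter.mp hf2
  have hx1 : (w, f1.2) ∈ A := by rw [← hf1w]; exact hf1A
  have hx2 : (w, f2.2) ∈ A := by rw [← hf2w]; exact hf2A
  have hxne : f1.2 ≠ f2.2 := by
    intro h; exact hnf12 (Prod.ext (hf1w.trans hf2w.symm) h)
  obtain ⟨P1, hP1ne, hP1c, hP1l, hP1s⟩ := exists_source_path hd e1.1
  obtain ⟨P2, hP2ne, hP2c, hP2l, hP2s⟩ := exists_source_path hd e2.1
  obtain ⟨Q1, hQ1ne, hQ1c, hQ1h, hQ1t⟩ := exists_sink_path hd f1.2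
  obtain ⟨Q2, hQ2ne, hQ2c, hQ2h, hQ2t⟩ := exists_sink_path hd f2.2
  have hp11 := mk_ssp hd P1 q Q1 hP1ne hP1c hP1s hP1l hy1 hqc hqh hql hx1 hQ1ne hQ1c hQ1h hQ1t
  have hp12 := mk_ssp hd P1 q Q2 hP1ne hP1c hP1s hP1l hy1 hqc hqh hql hx2 hQ2ne hQ2c hQ2h hQ2t
  have hp21 := mk_ssp hd P2 q Q1 hP2ne hP2c hP2s hP2l hy2 hqc hqh hql hx1 hQ1ne hQ1c hQ1h hQ1t
  obtain ⟨e, he, r0, _, huniq⟩ := hf _ hp11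
  -- q = u :: q'
  cases q with
  | nil => simp at hqh
  | cons u0 q' =>
    have hu0 : u0 = u := by simpa using hqh
    subst hu0
    rw [show (u0 :: q') ++ Q1 = u0 :: (q' ++ Q1) from rfl, arcsOf_append P1 u0 (q' ++ Q1)] at he
    rcases List.mem_append.mp he with he | he
    · -- e in prefix part: vary the Q side
      have he12 : e ∈ arcsOf (P1 ++ ((u0 :: q') ++ Q2)) := by
        rw [show (u0 :: q') ++ Q2 = u0 :: (q' ++ Q2) from rfl, arcsOf_append P1 u0 (q' ++ Q2)]
        exact List.mem_append_left _ he
      have heq1 := huniq _ ⟨hp11, by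
        rw [show (u0 :: q') ++ Q1 = u0 :: (q' ++ Q1) from rfl, arcsOf_append P1 u0 (q' ++ Q1)]
        exact List.mem_append.mpr (Or.inl he)⟩
      have heq2 := huniq _ ⟨hp12, he12⟩
      have : Q1 = Q2 := by
        have h := heq1.trans heq2.symm
        exact List.append_cancel_left (List.append_cancel_left h)
      rw [this, hQ2h] at hQ1h
      exact hxne (by simpa using hQ1h.symm) |>.elim
      -- hQ1h : Q1.head? = some f1.2 originally
    · -- e in suffix part: vary the P side
      have he21 : e ∈ arcsOf (P2 ++ ((u0 :: q') ++ Q1)) := by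
        rw [show (u0 :: q') ++ Q1 = u0 :: (q' ++ Q1) from rfl, arcsOf_append P2 u0 (q' ++ Q1)]
        exact List.mem_append_right _ he
      have heq1 := huniq _ ⟨hp11, by
        rw [show (u0 :: q') ++ Q1 = u0 :: (q' ++ Q1) from rfl, arcsOf_append P1 u0 (q' ++ Q1)]
        exact List.mem_append.mpr (Or.inr he)⟩
      have heq2 := huniq _ ⟨hp21, he21⟩
      have hPP : P1 = P2 := List.append_cancel_right (heq1.trans heq2.symm)
      rw [hPP, hP2l] at hP1l
      exact hyne (by simpa using hP1l.symm) |>.elim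

end Part3

section Part4

lemma isDAG_subset {A C : Finset (V × V)} (h : C ⊆ A) (hd : IsDAG A) : IsDAG C :=
  fun v hv => hd v (Relation.TransGen.mono (fun _ _ hab => h hab) _ _ hv)

lemma bad_mono {A C : Finset (V × V)} (h : C ⊆ A) : IsBad C → IsBad A := by
  rintro ⟨u, w, hu, hw, huw⟩
  exact ⟨u, w, le_trans hu (Finset.card_le_card (Finset.filter_subset_filter _ h)),
    le_trans hw (Finset.card_le_card (Finset.filter_subset_filter _ h)),
    Relation.ReflTransGen.mono (fun _ _ hab => h hab) _ _ huw⟩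

lemma funnel_subset {A C : Finset (V × V)} (hd : IsDAG A) (h : C ⊆ A) (hf : IsFunnel A) :
    IsFunnel C :=
  funnel_of_not_bad (fun hb => not_bad_of_funnel hd hf (bad_mono h hb))

lemma funnel_empty : IsFunnel (∅ : Finset (V × V)) := by
  intro p hp
  obtain ⟨hlen, hchain, -, -, -⟩ := hp
  cases p with
  | nil => simp at hlen
  | cons x t =>
    cases t with
    | nil => simp at hlen
    | cons y t' => exact absurd (List.isChain_cons_cons.mp hchain).1 (Finset.notMem_empty _)

end Part4

/-- If `H 1, …, H k` are subgraphs of a DAG `D` with pairwise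
disjoint arc sets, then the sum of their arc-deletion distances to a funnel is
at most the arc-deletion distance to a funnel of `D`. -/
theorem sum_funnelDist_le (A : Finset (V × V)) (hdag : IsDAG A) (k : ℕ)
    (H : Fin k → Finset (V × V)) (hsub : ∀ i, H i ⊆ A)
    (hdisj : ∀ i j, i ≠ j → Disjoint (H i) (H j)) :
    ∑ i, funnelDist (H i) ≤ funnelDist A := by
  have hne : Set.Nonempty {k | ∃ B ⊆ A, B.card = k ∧ IsFunnel (A \ B)} :=
    ⟨A.card, A, Finset.Subset.refl A, rfl, by rw [Finset.sdiff_self]; exact funnel_empty⟩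
  obtain ⟨B, hBA, hBcard, hBf⟩ := Nat.sInf_mem hne
  have hdag' : IsDAG (A \ B) := isDAG_subset Finset.sdiff_subset hdag
  have key : ∀ i, funnelDist (H i) ≤ (B ∩ H i).card := by
    intro i
    apply Nat.sInf_le
    refine ⟨B ∩ H i, Finset.inter_subset_right, rfl, ?_⟩
    have hsubC : H i \ (B ∩ H i) ⊆ A \ B := by
      intro e he
      rw [Finset.mem_sdiff] at he ⊢
      refine ⟨hsub i he.1, fun hB => he.2 (Finset.mem_inter.mpr ⟨hB, he.1⟩)⟩
    exact funnel_subset hdag' hsubC hBf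
  calc ∑ i, funnelDist (H i) ≤ ∑ i, (B ∩ H i).card := Finset.sum_le_sum (fun i _ => key i)
    _ = (Finset.univ.biUnion fun i => B ∩ H i).card :=
        (Finset.card_biUnion (fun i _ j _ hij =>
          (hdisj i j hij).mono Finset.inter_subset_right Finset.inter_subset_right)).symm
    _ ≤ B.card := Finset.card_le_card
        (Finset.biUnion_subset.mpr fun i _ => Finset.inter_subset_left)
    _ = funnelDist A := hBcard
end Helpers
end
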